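/- arXiv:1705.02379 — 9 statements merged into one kernel-verified Lean document; each statement's English description precedes it below -/
import Mathlib

section
/- If G is a finite bowtie-free graph (a graph containing no bowtie, i.e. no two triangles sharing exactly one vertex, as a subgraph), then G is an induced subgraph of some finite good bowtie-free graph G', where a bowtie-free graph is called good if every vertex is contained in a copy of a chimney Ch_n (the free amalgamation of n ≥ 2 triangles over one common edge) or in a copy of the complete graph K_4. -/
/-- The bowtie graph: two triangles {0,1,2} and {2,3,4} sharing exactly the vertex 2. -/
def bowtie : SimpleGraph (Fin 5) :=
  SimpleGraph.fromRel (fun a b =>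
    ((a : ℕ), (b : ℕ)) ∈ ({(0,1),(0,2),(1,2),(2,3),(2,4),(3,4)} : Set (ℕ × ℕ)))

/-- A graph is bowtie-free if there is no monomorphism from the bowtie into it. -/
def BowtieFree {V : Type} (G : SimpleGraph V) : Prop :=
  ¬∃ f : Fin 5 → V, Function.Injective f ∧ ∀ a b, bowtie.Adj a b → G.Adj (f a) (f b)

/-- The chimney `Ch_n`: two base vertices (the left summand) joined to each other and to
`n` apex vertices (the right summand); apexes are pairwise non-adjacent. -/
def chimney (n : ℕ) : SimpleGraph (Fin 2 ⊕ Fin n) :=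
  SimpleGraph.fromRel (fun a b => a.isLeft ∨ b.isLeft)

/-- `v` lies in an induced copy of some chimney `Ch_n` with `n ≥ 2`. -/
def InChimneyCopy {W : Type} (G : SimpleGraph W) (v : W) : Prop :=
  ∃ n, 2 ≤ n ∧ ∃ f : (Fin 2 ⊕ Fin n) → W, Function.Injective f ∧
    (∀ a b, (chimney n).Adj a b ↔ G.Adj (f a) (f b)) ∧ v ∈ Set.range f

/-- `v` lies in a copy of the complete graph `K₄`. -/
def InK4Copy {W : Type} (G : SimpleGraph W) (v : W) : Prop :=
  ∃ f : Fin 4 → W, Function.Injective f ∧ (∀ i j, i ≠ j → G.Adj (f i) (f j)) ∧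
    v ∈ Set.range f

/-- A bowtie-free graph is good if every vertex lies in a chimney or in a `K₄`. -/
def Good {W : Type} (G : SimpleGraph W) : Prop :=
  ∀ v, InChimneyCopy G v ∨ InK4Copy G v


def HasBow {W : Type} (H : SimpleGraph W) : Prop :=
  ∃ a b c d e : W, a ≠ d ∧ a ≠ e ∧ b ≠ d ∧ b ≠ e ∧
    H.Adj a b ∧ H.Adj a c ∧ H.Adj b c ∧ H.Adj c d ∧ H.Adj c e ∧ H.Adj d e

lemma bowtieFree_iff {W : Type} (H : SimpleGraph W) : BowtieFree H ↔ ¬ HasBow H := by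
  constructor
  · intro hB hbow
    obtain ⟨a,b,c,d,e,had,hae,hbd,hbe,h1,h2,h3,h4,h5,h6⟩ := hbow
    apply hB
    refine ⟨![a,b,c,d,e], ?_, ?_⟩
    · have hab := h1.ne; have hac := h2.ne; have hbc := h3.ne
      have hcd := h4.ne; have hce := h5.ne; have hde := h6.ne
      intro i j hij
      fin_cases i <;> fin_cases j <;> simp_all <;> omega
    · intro i j hij
      fin_cases i <;> fin_cases j <;>
        simp [bowtie, SimpleGraph.fromRel_adj, Set.mem_insert_iff, Prod.ext_iff] at hij <;>
        simp_all [H.adj_comm] <;> omega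
  · intro hbow ⟨f, hf, hadj⟩
    apply hbow
    have h01 : bowtie.Adj 0 1 := by simp [bowtie, SimpleGraph.fromRel_adj] <;> omega
    have h02 : bowtie.Adj 0 2 := by simp [bowtie, SimpleGraph.fromRel_adj] <;> omega
    have h12 : bowtie.Adj 1 2 := by simp [bowtie, SimpleGraph.fromRel_adj] <;> omega
    have h23 : bowtie.Adj 2 3 := by simp [bowtie, SimpleGraph.fromRel_adj] <;> omega
    have h24 : bowtie.Adj 2 4 := by simp [bowtie, SimpleGraph.fromRel_adj] <;> omega
    have h34 : bowtie.Adj 3 4 := by simp [bowtie, SimpleGraph.fromRel_adj] <;> omega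
    exact ⟨f 0, f 1, f 2, f 3, f 4,
      fun h => by simpa using hf h, fun h => by simpa using hf h,
      fun h => by simpa using hf h, fun h => by simpa using hf h,
      hadj _ _ h01, hadj _ _ h02, hadj _ _ h12, hadj _ _ h23, hadj _ _ h24, hadj _ _ h34⟩

lemma chimney_of {W : Type} (H : SimpleGraph W) (p q : W) (S : Finset W)
    (hpq : H.Adj p q) (hp : p ∉ S) (hq : q ∉ S) (hcard : 2 ≤ S.card)
    (hadj : ∀ s ∈ S, H.Adj p s ∧ H.Adj q s)
    (hnon : ∀ s ∈ S, ∀ t ∈ S, s ≠ t → ¬H.Adj s t)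
    (v : W) (hv : v = p ∨ v = q ∨ v ∈ S) : InChimneyCopy H v := by
  refine ⟨S.card, hcard, Sum.elim (fun i => if i = 0 then p else q)
    (fun j => (S.equivFin.symm j : W)), ?_, ?_, ?_⟩
  · intro a b hab
    have hmem : ∀ j : Fin S.card, (S.equivFin.symm j : W) ∈ S := fun j => (S.equivFin.symm j).2
    match a, b with
    | Sum.inl i, Sum.inl j =>
      fin_cases i <;> fin_cases j <;> simp_all <;> exact absurd hab hpq.ne
    | Sum.inl i, Sum.inr j =>
      exfalso
      have hj := hmem j
      have heq : (if i = 0 then p else q) = (S.equivFin.symm j : W) := by simpa using hab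
      by_cases h0 : i = 0
      · rw [if_pos h0] at heq; exact hp (heq ▸ hj)
      · rw [if_neg h0] at heq; exact hq (heq ▸ hj)
    | Sum.inr i, Sum.inl j =>
      exfalso
      have hi := hmem i
      have heq : (S.equivFin.symm i : W) = (if j = 0 then p else q) := by simpa using hab
      by_cases h0 : j = 0
      · rw [if_pos h0] at heq; exact hp (heq ▸ hi)
      · rw [if_neg h0] at heq; exact hq (heq ▸ hi)
    | Sum.inr i, Sum.inr j =>
      have : S.equivFin.symm i = S.equivFin.symm j := Subtype.ext hab
      simpa using congrArg S.equivFin this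
  · intro a b
    have hmem : ∀ j : Fin S.card, (S.equivFin.symm j : W) ∈ S := fun j => (S.equivFin.symm j).2
    match a, b with
    | Sum.inl i, Sum.inl j =>
      simp only [chimney, SimpleGraph.fromRel_adj]
      constructor
      · rintro ⟨hne, -⟩
        have : i ≠ j := fun h => hne (by rw [h])
        fin_cases i <;> fin_cases j <;> simp_all <;> exact hpq.symm
      · intro h
        have : i ≠ j := by rintro rfl; exact H.irrefl h
        simp [this]
    | Sum.inl i, Sum.inr j =>
      simp only [chimney, SimpleGraph.fromRel_adj]
      constructor
      · intro _
        fin_cases i <;> simp <;> [exact (hadj _ (hmem j)).1 ; exact (hadj _ (hmem j)).2]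
      · intro _; simp
    | Sum.inr i, Sum.inl j =>
      simp only [chimney, SimpleGraph.fromRel_adj]
      constructor
      · intro _
        fin_cases j <;> simp <;>
          [exact ((hadj _ (hmem i)).1).symm ; exact ((hadj _ (hmem i)).2).symm]
      · intro _; simp
    | Sum.inr i, Sum.inr j =>
      simp only [chimney, SimpleGraph.fromRel_adj]
      constructor
      · simp
      · intro h
        exfalso
        rcases eq_or_ne i j with rfl | hij
        · exact H.irrefl h
        · refine hnon _ (hmem i) _ (hmem j) ?_ (by simpa using h)
          intro hEq
          exact hij (by simpa using congrArg S.equivFin (Subtype.ext hEq))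
  · rcases hv with rfl | rfl | hvS
    · exact ⟨Sum.inl 0, by simp⟩
    · exact ⟨Sum.inl 1, by simp⟩
    · exact ⟨Sum.inr (S.equivFin ⟨v, hvS⟩), by simp⟩

lemma k4_of {W : Type} (H : SimpleGraph W) (a b c d : W)
    (h1 : H.Adj a b) (h2 : H.Adj a c) (h3 : H.Adj a d) (h4 : H.Adj b c)
    (h5 : H.Adj b d) (h6 : H.Adj c d) (v : W) (hv : v = a ∨ v = b ∨ v = c ∨ v = d) :
    InK4Copy H v := by
  refine ⟨![a,b,c,d], ?_, ?_, ?_⟩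
  · have := h1.ne; have := h2.ne; have := h3.ne; have := h4.ne; have := h5.ne; have := h6.ne
    intro i j hij
    fin_cases i <;> fin_cases j <;> simp_all <;> omega
  · intro i j hij
    fin_cases i <;> fin_cases j <;> simp_all [H.adj_comm]
  · rcases hv with rfl|rfl|rfl|rfl
    exacts [⟨0, rfl⟩, ⟨1, rfl⟩, ⟨2, rfl⟩, ⟨3, rfl⟩]

lemma two_tri {W : Type} {H : SimpleGraph W} (h : ¬HasBow H) {a b c d e : W}
    (h1 : H.Adj a b) (h2 : H.Adj a c) (h3 : H.Adj b c) (h4 : H.Adj c d)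
    (h5 : H.Adj c e) (h6 : H.Adj d e)
    (n1 : a ≠ d) (n2 : a ≠ e) (n3 : b ≠ d) (n4 : b ≠ e) : False :=
  h ⟨a,b,c,d,e,n1,n2,n3,n4,h1,h2,h3,h4,h5,h6⟩

def TFree {V : Type} (G : SimpleGraph V) (v : V) : Prop :=
  ∀ x y, ¬(G.Adj v x ∧ G.Adj v y ∧ G.Adj x y)

section Lonely
variable {V : Type} [LinearOrder V]

def LonelyT (G : SimpleGraph V) (m x y : V) : Prop :=
  m < x ∧ x < y ∧ G.Adj m x ∧ G.Adj m y ∧ G.Adj x y ∧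
    (∀ w, G.Adj m w → G.Adj x w → w = y) ∧ (∀ w, G.Adj m w → G.Adj y w → w = x) ∧
    (∀ w, G.Adj x w → G.Adj y w → w = m)

lemma mk_lonely_sorted (G : SimpleGraph V) {a b c : V} (o1 : a < b) (o2 : b < c)
    (hab : G.Adj a b) (hac : G.Adj a c) (hbc : G.Adj b c)
    (u1 : ∀ w, G.Adj a w → G.Adj b w → w = c)
    (u2 : ∀ w, G.Adj a w → G.Adj c w → w = b)
    (u3 : ∀ w, G.Adj b w → G.Adj c w → w = a) : LonelyT G a b c :=
  ⟨o1, o2, hab, hac, hbc, u1, u2, u3⟩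

lemma mk_lonely (G : SimpleGraph V) {a b c : V}
    (hab : G.Adj a b) (hac : G.Adj a c) (hbc : G.Adj b c)
    (u1 : ∀ w, G.Adj a w → G.Adj b w → w = c)
    (u2 : ∀ w, G.Adj a w → G.Adj c w → w = b)
    (u3 : ∀ w, G.Adj b w → G.Adj c w → w = a) :
    ∃ m x y, LonelyT G m x y ∧
      ∀ t, (t = a ∨ t = b ∨ t = c) → (t = m ∨ t = x ∨ t = y) := by
  rcases lt_trichotomy a b with h1 | h1 | h1
  · rcases lt_trichotomy b c with h2 | h2 | h2
    · exact ⟨a, b, c, mk_lonely_sorted G h1 h2 hab hac hbc u1 u2 u3, by tauto⟩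
    · exact absurd h2 (by simp [hbc.ne])
    · rcases lt_trichotomy a c with h3 | h3 | h3
      · exact ⟨a, c, b, mk_lonely_sorted G h3 h2 hac hab hbc.symm u2 u1
          (fun w p q => u3 w q p), by tauto⟩
      · exact absurd h3 (by simp [hac.ne])
      · exact ⟨c, a, b, mk_lonely_sorted G h3 h1 hac.symm hbc.symm hab
          (fun w p q => u2 w q p) (fun w p q => u3 w q p) u1, by tauto⟩
  · exact absurd h1 (by simp [hab.ne])
  · rcases lt_trichotomy a c with h2 | h2 | h2
    · exact ⟨b, a, c, mk_lonely_sorted G h1 h2 hab.symm hbc hac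
        (fun w p q => u1 w q p) u3 u2, by tauto⟩
    · exact absurd h2 (by simp [hac.ne])
    · rcases lt_trichotomy b c with h3 | h3 | h3
      · exact ⟨b, c, a, mk_lonely_sorted G h3 h2 hbc hab.symm hac.symm u3
          (fun w p q => u1 w q p) (fun w p q => u2 w q p), by tauto⟩
      · exact absurd h3 (by simp [hbc.ne])
      · exact ⟨c, b, a, mk_lonely_sorted G h3 h1 hbc.symm hac.symm hab.symm
          (fun w p q => u3 w q p) (fun w p q => u2 w q p) (fun w p q => u1 w q p), by tauto⟩

variable [Fintype V]

lemma classify (G : SimpleGraph V) (h : ¬HasBow G) (v : V) :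
    (∀ x y, ¬(G.Adj v x ∧ G.Adj v y ∧ G.Adj x y)) ∨ InK4Copy G v ∨ InChimneyCopy G v ∨
      ∃ m x y, LonelyT G m x y ∧ (v = m ∨ v = x ∨ v = y) := by
  classical
  by_cases htri : ∃ x y, G.Adj v x ∧ G.Adj v y ∧ G.Adj x y
  swap
  · exact Or.inl (fun x y hxy => htri ⟨x, y, hxy⟩)
  obtain ⟨x, y, hvx, hvy, hxy⟩ := htri
  right
  by_cases hA : ∃ a b c, G.Adj v a ∧ G.Adj v b ∧ G.Adj v c ∧ G.Adj a b ∧ G.Adj a c ∧ b ≠ c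
  · obtain ⟨a, b, c, hva, hvb, hvc, hab, hac, hbc⟩ := hA
    by_cases hbc' : G.Adj b c
    · exact Or.inl (k4_of G v a b c hva hvb hvc hab hac hbc' v (Or.inl rfl))
    · refine Or.inr (Or.inl ?_)
      set S : Finset V := Finset.univ.filter (fun w => G.Adj v w ∧ G.Adj a w) with hS
      have hmemS : ∀ w, w ∈ S ↔ G.Adj v w ∧ G.Adj a w := by
        intro w; simp [hS]
      refine chimney_of G v a S hva ?_ ?_ ?_ ?_ ?_ v (Or.inl rfl)
      · intro hv; exact G.irrefl ((hmemS v).1 hv).1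
      · intro ha; exact G.irrefl ((hmemS a).1 ha).2
      · refine Finset.one_lt_card.2 ⟨b, (hmemS b).2 ⟨hvb, hab⟩, c, (hmemS c).2 ⟨hvc, hac⟩, hbc⟩
      · intro s hs; exact ((hmemS s).1 hs)
      · intro w1 hw1 w2 hw2 hne hadj12
        obtain ⟨hvw1, haw1⟩ := (hmemS w1).1 hw1
        obtain ⟨hvw2, haw2⟩ := (hmemS w2).1 hw2
        have hu : ∃ u, (G.Adj v u ∧ G.Adj a u) ∧ u ≠ w1 ∧ u ≠ w2 := by
          by_cases hb1 : b = w1 ∨ b = w2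
          · refine ⟨c, ⟨hvc, hac⟩, ?_, ?_⟩
            · rintro rfl
              rcases hb1 with rfl | rfl
              · exact hbc rfl
              · exact hbc' hadj12.symm
            · rintro rfl
              rcases hb1 with rfl | rfl
              · exact hbc' hadj12
              · exact hbc rfl
          · push_neg at hb1
            exact ⟨b, ⟨hvb, hab⟩, hb1.1, hb1.2⟩
        obtain ⟨u, ⟨hvu, hau⟩, hu1, hu2⟩ := hu
        -- triangles {w1,w2,a} and {a,v,u} share exactly a
        exact two_tri h hadj12 haw1.symm haw2.symm hva.symm hau hvu
          (fun hEq => G.irrefl (hEq ▸ hvw1)) hu1.symm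
          (fun hEq => G.irrefl (hEq ▸ hvw2)) hu2.symm
  · push_neg at hA
    by_cases hB : ∃ u, u ≠ v ∧ G.Adj x u ∧ G.Adj y u
    · refine Or.inr (Or.inl ?_)
      set S : Finset V := Finset.univ.filter (fun w => G.Adj x w ∧ G.Adj y w) with hS
      have hmemS : ∀ w, w ∈ S ↔ G.Adj x w ∧ G.Adj y w := by
        intro w; simp [hS]
      obtain ⟨u, huv, hxu, hyu⟩ := hB
      refine chimney_of G x y S hxy ?_ ?_ ?_ ?_ ?_ v
        (Or.inr (Or.inr ((hmemS v).2 ⟨hvx.symm, hvy.symm⟩)))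
      · intro hx; exact G.irrefl ((hmemS x).1 hx).1
      · intro hy; exact G.irrefl ((hmemS y).1 hy).2
      · exact Finset.one_lt_card.2 ⟨v, (hmemS v).2 ⟨hvx.symm, hvy.symm⟩,
          u, (hmemS u).2 ⟨hxu, hyu⟩, fun hEq => huv hEq.symm⟩
      · intro s hs; exact ((hmemS s).1 hs)
      · intro w1 hw1 w2 hw2 hne hadj12
        obtain ⟨hxw1, hyw1⟩ := (hmemS w1).1 hw1
        obtain ⟨hxw2, hyw2⟩ := (hmemS w2).1 hw2
        rcases eq_or_ne v w1 with rfl | hv1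
        · exact G.irrefl ((hA x y w2 hvx hvy hadj12 hxy hxw2) ▸ hyw2)
        rcases eq_or_ne v w2 with rfl | hv2
        · exact G.irrefl ((hA x y w1 hvx hvy hadj12.symm hxy hxw1) ▸ hyw1)
        -- triangles {w1,w2,x} and {x,y,v}
        exact two_tri h hadj12 hxw1.symm hxw2.symm hxy hvx.symm hvy.symm
          (fun hEq => G.irrefl (hEq ▸ hyw1)) (Ne.symm hv1)
          (fun hEq => G.irrefl (hEq ▸ hyw2)) (Ne.symm hv2)
    · refine Or.inr (Or.inr ?_)
      push_neg at hB
      have U1 : ∀ w, G.Adj x w → G.Adj y w → w = v := by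
        intro w h1 h2
        by_contra hne
        exact hB w hne h1 h2
      have U2 : ∀ w, G.Adj v w → G.Adj x w → w = y :=
        fun w h1 h2 => (hA x y w hvx hvy h1 hxy h2).symm
      have U3 : ∀ w, G.Adj v w → G.Adj y w → w = x :=
        fun w h1 h2 => (hA y x w hvy hvx h1 hxy.symm h2).symm
      obtain ⟨m, x', y', hL, hmem⟩ := mk_lonely G hvx hvy hxy U2 U3 U1
      exact ⟨m, x', y', hL, hmem v (Or.inl rfl)⟩
end Lonely

section C
variable {V : Type} [LinearOrder V]

variable (G : SimpleGraph V)

abbrev Wt : Type := V ⊕ (({v : V // TFree G v} × Fin 3) ⊕ {t : V × V × V // LonelyT G t.1 t.2.1 t.2.2})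

def Rr : Wt G → Wt G → Prop
  | Sum.inl u, Sum.inl w => G.Adj u w
  | Sum.inl u, Sum.inr (Sum.inl p) => u = p.1.1
  | Sum.inl u, Sum.inr (Sum.inr t) => u = t.1.2.1 ∨ u = t.1.2.2
  | Sum.inr (Sum.inl p), Sum.inr (Sum.inl q) => p.1 = q.1 ∧ p.2 = 0 ∧ q.2 ≠ 0
  | _, _ => False

def Gext : SimpleGraph (Wt G) := SimpleGraph.fromRel (Rr G)

noncomputable instance [Fintype V] : Fintype (Wt G) := by
  classical
  infer_instance

lemma N1 (u w : V) : (Gext G).Adj (Sum.inl u) (Sum.inl w) ↔ G.Adj u w := by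
  simp only [Gext, SimpleGraph.fromRel_adj]
  constructor
  · rintro ⟨-, h | h⟩
    · exact h
    · exact h.symm
  · intro h; exact ⟨by simpa using h.ne, Or.inl h⟩

lemma N2 (u : V) (p : {v : V // TFree G v} × Fin 3) :
    (Gext G).Adj (Sum.inl u) (Sum.inr (Sum.inl p)) ↔ u = p.1.1 := by
  simp only [Gext, SimpleGraph.fromRel_adj]
  constructor
  · rintro ⟨-, h | h⟩
    · exact h
    · exact absurd h (by simp [Rr])
  · intro h; exact ⟨by simp, Or.inl h⟩

lemma N3 (u : V) (t : {t : V × V × V // LonelyT G t.1 t.2.1 t.2.2}) :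
    (Gext G).Adj (Sum.inl u) (Sum.inr (Sum.inr t)) ↔ (u = t.1.2.1 ∨ u = t.1.2.2) := by
  simp only [Gext, SimpleGraph.fromRel_adj]
  constructor
  · rintro ⟨-, h | h⟩
    · exact h
    · exact absurd h (by simp [Rr])
  · intro h; exact ⟨by simp, Or.inl h⟩

lemma N4 (p q : {v : V // TFree G v} × Fin 3) :
    (Gext G).Adj (Sum.inr (Sum.inl p)) (Sum.inr (Sum.inl q)) ↔
      (p.1 = q.1 ∧ ((p.2 = 0 ∧ q.2 ≠ 0) ∨ (q.2 = 0 ∧ p.2 ≠ 0))) := by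
  simp only [Gext, SimpleGraph.fromRel_adj]
  constructor
  · rintro ⟨-, ⟨h1, h2, h3⟩ | ⟨h1, h2, h3⟩⟩
    · exact ⟨h1, Or.inl ⟨h2, h3⟩⟩
    · exact ⟨h1.symm, Or.inr ⟨h2, h3⟩⟩
  · rintro ⟨h1, ⟨h2, h3⟩ | ⟨h2, h3⟩⟩
    · refine ⟨?_, Or.inl ⟨h1, h2, h3⟩⟩
      intro hEq
      obtain rfl : p = q := by simpa using hEq
      exact h3 h2
    · refine ⟨?_, Or.inr ⟨h1.symm, h2, h3⟩⟩
      intro hEq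
      obtain rfl : p = q := by simpa using hEq
      exact h3 h2

lemma N5 (p : {v : V // TFree G v} × Fin 3) (t : {t : V × V × V // LonelyT G t.1 t.2.1 t.2.2}) :
    ¬ (Gext G).Adj (Sum.inr (Sum.inl p)) (Sum.inr (Sum.inr t)) := by
  simp only [Gext, SimpleGraph.fromRel_adj]
  rintro ⟨-, h | h⟩ <;> exact h

lemma N6 (t s : {t : V × V × V // LonelyT G t.1 t.2.1 t.2.2}) :
    ¬ (Gext G).Adj (Sum.inr (Sum.inr t)) (Sum.inr (Sum.inr s)) := by
  simp only [Gext, SimpleGraph.fromRel_adj]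
  rintro ⟨-, h | h⟩ <;> exact h

end C


section D
variable {V : Type} [LinearOrder V] {G : SimpleGraph V}

lemma uniq_x (h : ¬HasBow G) {m x y : V} (hL : LonelyT G m x y) {u w : V}
    (h1 : G.Adj x u) (h2 : G.Adj x w) (h3 : G.Adj u w) :
    (u = m ∧ w = y) ∨ (u = y ∧ w = m) := by
  obtain ⟨o1, o2, amx, amy, axy, U1, U2, U3⟩ := hL
  rcases eq_or_ne u m with rfl | hum
  · exact Or.inl ⟨rfl, U1 w h3 h2⟩
  rcases eq_or_ne u y with rfl | huy
  · exact Or.inr ⟨rfl, U3 w h2 h3⟩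
  rcases eq_or_ne w m with rfl | hwm
  · exact Or.inr ⟨U1 u h3.symm h1, rfl⟩
  rcases eq_or_ne w y with rfl | hwy
  · exact Or.inl ⟨U3 u h1 h3.symm, rfl⟩
  exact absurd (two_tri h h3 h1.symm h2.symm amx.symm axy amy hum huy hwm hwy) id

lemma uniq_y (h : ¬HasBow G) {m x y : V} (hL : LonelyT G m x y) {u w : V}
    (h1 : G.Adj y u) (h2 : G.Adj y w) (h3 : G.Adj u w) :
    (u = m ∧ w = x) ∨ (u = x ∧ w = m) := by
  obtain ⟨o1, o2, amx, amy, axy, U1, U2, U3⟩ := hL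
  rcases eq_or_ne u m with rfl | hum
  · exact Or.inl ⟨rfl, U2 w h3 h2⟩
  rcases eq_or_ne u x with rfl | hux
  · exact Or.inr ⟨rfl, U3 w h3 h2⟩
  rcases eq_or_ne w m with rfl | hwm
  · exact Or.inr ⟨U2 u h3.symm h1, rfl⟩
  rcases eq_or_ne w x with rfl | hwx
  · exact Or.inl ⟨U3 u h3.symm h1, rfl⟩
  exact absurd (two_tri h h3 h1.symm h2.symm amy.symm axy.symm amx hum hux hwm hwx) id

lemma lonely_eq (h : ¬HasBow G) {t s : V × V × V}
    (ht : LonelyT G t.1 t.2.1 t.2.2) (hs : LonelyT G s.1 s.2.1 s.2.2)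
    (hcom : t.2.1 = s.2.1 ∨ t.2.1 = s.2.2 ∨ t.2.2 = s.2.1 ∨ t.2.2 = s.2.2) : t = s := by
  obtain ⟨p1, p2, bmx, bmy, bxy, W1, W2, W3⟩ := hs
  obtain ⟨o1, o2, amx, amy, axy, U1, U2, U3⟩ := id ht
  have hty : t.1 < t.2.2 := o1.trans o2
  have hsy : s.1 < s.2.2 := p1.trans p2
  rcases hcom with hc | hc | hc | hc
  · have a1 : G.Adj t.2.1 s.1 := by rw [hc]; exact bmx.symm
    have a2 : G.Adj t.2.1 s.2.2 := by rw [hc]; exact bxy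
    rcases uniq_x h ht a1 a2 bmy with ⟨e1, e2⟩ | ⟨e1, e2⟩
    · exact Prod.ext e1.symm (Prod.ext hc e2.symm)
    · have : t.2.2 < t.1 := by rw [← e1, ← e2]; exact hsy
      exact absurd this (lt_asymm hty)
  · have a1 : G.Adj t.2.1 s.1 := by rw [hc]; exact bmy.symm
    have a2 : G.Adj t.2.1 s.2.1 := by rw [hc]; exact bxy.symm
    rcases uniq_x h ht a1 a2 bmx with ⟨e1, e2⟩ | ⟨e1, e2⟩
    · have : t.2.2 < t.2.1 := by rw [← e2, hc]; exact p2
      exact absurd this (lt_asymm o2)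
    · have : t.2.2 < t.2.1 := by rw [← e1, hc]; exact hsy
      exact absurd this (lt_asymm o2)
  · have a1 : G.Adj t.2.2 s.1 := by rw [hc]; exact bmx.symm
    have a2 : G.Adj t.2.2 s.2.2 := by rw [hc]; exact bxy
    rcases uniq_y h ht a1 a2 bmy with ⟨e1, e2⟩ | ⟨e1, e2⟩
    · have : t.2.2 < t.2.1 := by rw [← e2, hc]; exact p2
      exact absurd this (lt_asymm o2)
    · have h5 : t.1 < s.2.1 := by rw [← hc]; exact hty
      have h6 : t.1 < t.1 := by
        have := h5.trans p2
        rwa [e2] at this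
      exact absurd h6 (lt_irrefl _)
  · have a1 : G.Adj t.2.2 s.1 := by rw [hc]; exact bmy.symm
    have a2 : G.Adj t.2.2 s.2.1 := by rw [hc]; exact bxy.symm
    rcases uniq_y h ht a1 a2 bmx with ⟨e1, e2⟩ | ⟨e1, e2⟩
    · exact Prod.ext e1.symm (Prod.ext e2.symm hc)
    · have : t.2.1 < t.1 := by rw [← e1, ← e2]; exact p1
      exact absurd this (lt_asymm o1)
end D

section E
variable {V : Type} [LinearOrder V] {G : SimpleGraph V}

lemma tri_inl (v0 : V) {B C : Wt G}
    (h1 : (Gext G).Adj (Sum.inl v0) B) (h2 : (Gext G).Adj (Sum.inl v0) C)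
    (h3 : (Gext G).Adj B C) :
    (∃ b0 c0, B = Sum.inl b0 ∧ C = Sum.inl c0 ∧ G.Adj v0 b0 ∧ G.Adj v0 c0 ∧ G.Adj b0 c0) ∨
    (∃ (t : {v : V // TFree G v}) (j k : Fin 3), t.1 = v0 ∧
      B = Sum.inr (Sum.inl (t, j)) ∧ C = Sum.inr (Sum.inl (t, k)) ∧
      ((j = 0 ∧ k ≠ 0) ∨ (k = 0 ∧ j ≠ 0))) ∨
    (∃ (s : {t : V × V × V // LonelyT G t.1 t.2.1 t.2.2}) (w : V),
      ((v0 = s.1.2.1 ∧ w = s.1.2.2) ∨ (v0 = s.1.2.2 ∧ w = s.1.2.1)) ∧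
      ((B = Sum.inr (Sum.inr s) ∧ C = Sum.inl w) ∨
        (C = Sum.inr (Sum.inr s) ∧ B = Sum.inl w))) := by
  match B, C with
  | Sum.inl b0, Sum.inl c0 =>
    exact Or.inl ⟨b0, c0, rfl, rfl, (N1 G _ _).1 h1, (N1 G _ _).1 h2, (N1 G _ _).1 h3⟩
  | Sum.inl b0, Sum.inr (Sum.inl q) =>
    exfalso
    have e1 : b0 = q.1.1 := (N2 G _ _).1 h3
    have e2 : v0 = q.1.1 := (N2 G _ _).1 h2
    exact ((N1 G _ _).1 h1).ne (e2.trans e1.symm)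
  | Sum.inr (Sum.inl p), Sum.inl c0 =>
    exfalso
    have e1 : c0 = p.1.1 := (N2 G _ _).1 (h3.symm)
    have e2 : v0 = p.1.1 := (N2 G _ _).1 h1
    exact ((N1 G _ _).1 h2).ne (e2.trans e1.symm)
  | Sum.inr (Sum.inl p), Sum.inr (Sum.inl q) =>
    obtain ⟨hpq, hcond⟩ := (N4 G _ _).1 h3
    refine Or.inr (Or.inl ⟨p.1, p.2, q.2, ((N2 G _ _).1 h1).symm, by simp, ?_, hcond⟩)
    rw [hpq]
  | Sum.inl b0, Sum.inr (Sum.inr s) =>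
    have hb : b0 = s.1.2.1 ∨ b0 = s.1.2.2 := (N3 G _ _).1 h3
    have hv : v0 = s.1.2.1 ∨ v0 = s.1.2.2 := (N3 G _ _).1 h2
    have hne : v0 ≠ b0 := ((N1 G _ _).1 h1).ne
    refine Or.inr (Or.inr ⟨s, b0, ?_, Or.inr ⟨rfl, rfl⟩⟩)
    rcases hv with rfl | rfl
    · rcases hb with rfl | rfl
      · exact absurd rfl hne
      · exact Or.inl ⟨rfl, rfl⟩
    · rcases hb with rfl | rfl
      · exact Or.inr ⟨rfl, rfl⟩
      · exact absurd rfl hne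
  | Sum.inr (Sum.inr s), Sum.inl c0 =>
    have hb : c0 = s.1.2.1 ∨ c0 = s.1.2.2 := (N3 G _ _).1 h3.symm
    have hv : v0 = s.1.2.1 ∨ v0 = s.1.2.2 := (N3 G _ _).1 h1
    have hne : v0 ≠ c0 := ((N1 G _ _).1 h2).ne
    refine Or.inr (Or.inr ⟨s, c0, ?_, Or.inl ⟨rfl, rfl⟩⟩)
    rcases hv with rfl | rfl
    · rcases hb with rfl | rfl
      · exact absurd rfl hne
      · exact Or.inl ⟨rfl, rfl⟩
    · rcases hb with rfl | rfl
      · exact Or.inr ⟨rfl, rfl⟩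
      · exact absurd rfl hne
  | Sum.inr (Sum.inl p), Sum.inr (Sum.inr s) => exact absurd h3 (N5 G _ _)
  | Sum.inr (Sum.inr s), Sum.inr (Sum.inl q) => exact absurd h3.symm (N5 G _ _)
  | Sum.inr (Sum.inr s), Sum.inr (Sum.inr u) => exact absurd h3 (N6 G _ _)

lemma nbr_apex {s : {t : V × V × V // LonelyT G t.1 t.2.1 t.2.2}} {z : Wt G}
    (h : (Gext G).Adj (Sum.inr (Sum.inr s)) z) :
    z = Sum.inl s.1.2.1 ∨ z = Sum.inl s.1.2.2 := by
  match z with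
  | Sum.inl u =>
    rcases (N3 G _ _).1 h.symm with rfl | rfl
    · exact Or.inl rfl
    · exact Or.inr rfl
  | Sum.inr (Sum.inl q) => exact absurd h.symm (N5 G _ _)
  | Sum.inr (Sum.inr u) => exact absurd h (N6 G _ _)

lemma nbr_gadget {p : {v : V // TFree G v} × Fin 3} {z : Wt G}
    (h : (Gext G).Adj (Sum.inr (Sum.inl p)) z) :
    z = Sum.inl p.1.1 ∨ ∃ j : Fin 3, z = Sum.inr (Sum.inl (p.1, j)) ∧
      ((p.2 = 0 ∧ j ≠ 0) ∨ (j = 0 ∧ p.2 ≠ 0)) := by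
  match z with
  | Sum.inl u =>
    left
    rw [(N2 G _ _).1 h.symm]
  | Sum.inr (Sum.inl q) =>
    obtain ⟨e, hc⟩ := (N4 G _ _).1 h
    exact Or.inr ⟨q.2, by rw [e], hc⟩
  | Sum.inr (Sum.inr u) => exact absurd h (N5 G _ _)

end E

section F
variable {V : Type} [LinearOrder V] {G : SimpleGraph V}

lemma next_nobow (h : ¬HasBow G) : ¬HasBow (Gext G) := by
  rintro ⟨a, b, c, d, e, nad, nae, nbd, nbe, h1, h2, h3, h4, h5, h6⟩
  rcases c with v0 | p | s
  · -- c = inl v0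
    rcases tri_inl v0 h2.symm h3.symm h1 with
        ⟨a0, b0, rfl, rfl, ha0, hb0, hab0⟩ | ⟨t, j, k, ht, rfl, rfl, hcnd⟩ |
        ⟨s, w1, hvw1, hor1⟩ <;>
      rcases tri_inl v0 h4 h5 h6 with
        ⟨d0, e0, rfl, rfl, hd0, he0, hde0⟩ | ⟨t', j', k', ht', rfl, rfl, hcnd'⟩ |
        ⟨s', w2, hvw2, hor2⟩
    · -- α α
      exact two_tri h hab0 ha0.symm hb0.symm hd0 he0 hde0
        (fun hEq => nad (by rw [hEq])) (fun hEq => nae (by rw [hEq]))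
        (fun hEq => nbd (by rw [hEq])) (fun hEq => nbe (by rw [hEq]))
    · -- α β
      exact t'.2 a0 b0 ⟨by rw [ht']; exact ha0, by rw [ht']; exact hb0, hab0⟩
    · -- α γ
      obtain ⟨o1, o2, amx, amy, axy, U1, U2, U3⟩ := s'.2
      rcases hvw2 with ⟨hv, hw⟩ | ⟨hv, hw⟩
      · -- v0 = x, w2 = y
        have huq := uniq_x h s'.2 (hv ▸ ha0) (hv ▸ hb0) hab0
        rcases huq with ⟨e1, e2⟩ | ⟨e1, e2⟩
        · -- b0 = y = w2
          rcases hor2 with ⟨hd, he⟩ | ⟨he, hd⟩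
          · exact nbe (by rw [he, e2, hw])
          · exact nbd (by rw [hd, e2, hw])
        · -- a0 = y = w2
          rcases hor2 with ⟨hd, he⟩ | ⟨he, hd⟩
          · exact nae (by rw [he, e1, hw])
          · exact nad (by rw [hd, e1, hw])
      · -- v0 = y, w2 = x
        have huq := uniq_y h s'.2 (hv ▸ ha0) (hv ▸ hb0) hab0
        rcases huq with ⟨e1, e2⟩ | ⟨e1, e2⟩
        · rcases hor2 with ⟨hd, he⟩ | ⟨he, hd⟩
          · exact nbe (by rw [he, e2, hw])
          · exact nbd (by rw [hd, e2, hw])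
        · rcases hor2 with ⟨hd, he⟩ | ⟨he, hd⟩
          · exact nae (by rw [he, e1, hw])
          · exact nad (by rw [hd, e1, hw])
    · -- β α
      exact t.2 d0 e0 ⟨by rw [ht]; exact hd0, by rw [ht]; exact he0, hde0⟩
    · -- β β
      obtain rfl : t = t' := Subtype.ext (ht.trans ht'.symm)
      rcases hcnd with ⟨rfl, -⟩ | ⟨rfl, -⟩ <;> rcases hcnd' with ⟨h0, -⟩ | ⟨h0, -⟩
      · exact nad (by rw [h0])
      · exact nae (by rw [h0])
      · exact nbd (by rw [h0])
      · exact nbe (by rw [h0])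
    · -- β γ
      rcases hvw2 with ⟨hv, -⟩ | ⟨hv, -⟩
      · exact t.2 s'.1.1 s'.1.2.2
          ⟨by rw [ht, hv]; exact s'.2.2.2.1.symm, by rw [ht, hv]; exact s'.2.2.2.2.2.1,
            s'.2.2.2.2.1⟩
      · exact t.2 s'.1.1 s'.1.2.1
          ⟨by rw [ht, hv]; exact s'.2.2.2.2.1.symm, by rw [ht, hv]; exact s'.2.2.2.2.2.1.symm,
            s'.2.2.2.1⟩
    · -- γ α
      rcases hvw1 with ⟨hv, hw⟩ | ⟨hv, hw⟩
      · have huq := uniq_x h s.2 (hv ▸ hd0) (hv ▸ he0) hde0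
        rcases huq with ⟨e1, e2⟩ | ⟨e1, e2⟩
        · rcases hor1 with ⟨ha, hb⟩ | ⟨hb, ha⟩
          · exact nbe (by rw [hb, hw, e2])
          · exact nae (by rw [ha, hw, e2])
        · rcases hor1 with ⟨ha, hb⟩ | ⟨hb, ha⟩
          · exact nbd (by rw [hb, hw, e1])
          · exact nad (by rw [ha, hw, e1])
      · have huq := uniq_y h s.2 (hv ▸ hd0) (hv ▸ he0) hde0
        rcases huq with ⟨e1, e2⟩ | ⟨e1, e2⟩
        · rcases hor1 with ⟨ha, hb⟩ | ⟨hb, ha⟩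
          · exact nbe (by rw [hb, hw, e2])
          · exact nae (by rw [ha, hw, e2])
        · rcases hor1 with ⟨ha, hb⟩ | ⟨hb, ha⟩
          · exact nbd (by rw [hb, hw, e1])
          · exact nad (by rw [ha, hw, e1])
    · -- γ β
      rcases hvw1 with ⟨hv, -⟩ | ⟨hv, -⟩
      · exact t'.2 s.1.1 s.1.2.2
          ⟨by rw [ht', hv]; exact s.2.2.2.1.symm, by rw [ht', hv]; exact s.2.2.2.2.2.1,
            s.2.2.2.2.1⟩
      · exact t'.2 s.1.1 s.1.2.1
          ⟨by rw [ht', hv]; exact s.2.2.2.2.1.symm, by rw [ht', hv]; exact s.2.2.2.2.2.1.symm,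
            s.2.2.2.1⟩
    · -- γ γ
      have hss : s = s' := by
        apply Subtype.ext
        apply lonely_eq h s.2 s'.2
        rcases hvw1 with ⟨hv1, -⟩ | ⟨hv1, -⟩ <;> rcases hvw2 with ⟨hv2, -⟩ | ⟨hv2, -⟩
        · exact Or.inl (by rw [← hv1, hv2])
        · exact Or.inr (Or.inl (by rw [← hv1, hv2]))
        · exact Or.inr (Or.inr (Or.inl (by rw [← hv1, hv2])))
        · exact Or.inr (Or.inr (Or.inr (by rw [← hv1, hv2])))
      subst hss
      rcases hor1 with ⟨ha, -⟩ | ⟨hb, -⟩ <;> rcases hor2 with ⟨hd, -⟩ | ⟨he, -⟩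
      · exact nad (by rw [ha, hd])
      · exact nae (by rw [ha, he])
      · exact nbd (by rw [hb, hd])
      · exact nbe (by rw [hb, he])
  · -- c = gadget p
    have key : ∀ u1 u2 : Wt G, (Gext G).Adj (Sum.inr (Sum.inl p)) u1 →
        (Gext G).Adj (Sum.inr (Sum.inl p)) u2 → (Gext G).Adj u1 u2 →
        u1 = Sum.inl p.1.1 ∨ u2 = Sum.inl p.1.1 := by
      intro u1 u2 k1 k2 k12
      rcases nbr_gadget k1 with hu1 | ⟨j, rfl, cj⟩
      · exact Or.inl hu1
      rcases nbr_gadget k2 with hu2 | ⟨k, rfl, ck⟩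
      · exact Or.inr hu2
      exfalso
      obtain ⟨-, hcond⟩ := (N4 G _ _).1 k12
      rcases cj with ⟨hp0, hj⟩ | ⟨hj, hp0⟩ <;> rcases ck with ⟨hp0', hk⟩ | ⟨hk, hp0'⟩
      · rcases hcond with ⟨hc1, -⟩ | ⟨hc1, -⟩
        · exact hj hc1
        · exact hk hc1
      · exact hp0' hp0
      · exact hp0 hp0'
      · rcases hcond with ⟨-, hc2⟩ | ⟨-, hc2⟩
        · exact hc2 hk
        · exact hc2 hj
    rcases key a b h2.symm h3.symm h1 with ha | hb <;>
      rcases key d e h4 h5 h6 with hd | he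
    · exact nad (by rw [ha, hd])
    · exact nae (by rw [ha, he])
    · exact nbd (by rw [hb, hd])
    · exact nbe (by rw [hb, he])
  · -- c = apex s
    rcases nbr_apex h2.symm with rfl | rfl <;> rcases nbr_apex h3.symm with rfl | rfl <;>
      rcases nbr_apex h4 with rfl | rfl <;> rcases nbr_apex h5 with rfl | rfl <;>
      first
        | exact (Gext G).irrefl h1
        | exact (Gext G).irrefl h6
        | exact nad rfl
        | exact nae rfl
        | exact nbd rfl
        | exact nbe rfl
end F

section G
variable {V : Type} [LinearOrder V] {G : SimpleGraph V}

lemma k4_lift {v0 : V} (hv : InK4Copy G v0) : InK4Copy (Gext G) (Sum.inl v0) := by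
  obtain ⟨f, hinj, hadj, i, rfl⟩ := hv
  exact ⟨Sum.inl ∘ f, Sum.inl_injective.comp hinj,
    fun i j hij => (N1 G _ _).2 (hadj i j hij), i, rfl⟩

lemma chim_lift {v0 : V} (hv : InChimneyCopy G v0) : InChimneyCopy (Gext G) (Sum.inl v0) := by
  obtain ⟨n, hn, f, hinj, hiff, i, rfl⟩ := hv
  exact ⟨n, hn, Sum.inl ∘ f, Sum.inl_injective.comp hinj,
    fun a b => (hiff a b).trans (N1 G _ _).symm, i, rfl⟩

lemma gadget_chimney (t : {v : V // TFree G v}) (z : Wt G)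
    (hz : z = Sum.inl t.1 ∨ z = Sum.inr (Sum.inl (t, 0)) ∨ z = Sum.inr (Sum.inl (t, 1)) ∨
      z = Sum.inr (Sum.inl (t, 2))) : InChimneyCopy (Gext G) z := by
  classical
  have h10 : (1 : Fin 3) ≠ 0 := by decide
  have h20 : (2 : Fin 3) ≠ 0 := by decide
  have h12 : (1 : Fin 3) ≠ 2 := by decide
  refine chimney_of (Gext G) (Sum.inl t.1) (Sum.inr (Sum.inl (t, 0)))
    {Sum.inr (Sum.inl (t, 1)), Sum.inr (Sum.inl (t, 2))}
    ((N2 G _ _).2 rfl) (by simp) ?_ ?_ ?_ ?_ z ?_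
  · intro hq
    rcases Finset.mem_insert.1 hq with hEq | hEq
    · obtain ⟨-, hEq2⟩ := Prod.mk.injEq .. ▸ (by
        simpa using hEq : ((t, 0) : {v : V // TFree G v} × Fin 3) = (t, 1))
      exact h10 (by simpa using hEq2.symm)
    · have : ((t, 0) : {v : V // TFree G v} × Fin 3) = (t, 2) := by simpa using hEq
      exact h20 (by simpa using (congrArg Prod.snd this).symm)
  · refine Finset.one_lt_card.2 ⟨_, Finset.mem_insert_self _ _, _,
      Finset.mem_insert_of_mem (Finset.mem_singleton_self _), ?_⟩
    intro hEq
    have : ((t, 1) : {v : V // TFree G v} × Fin 3) = (t, 2) := by simpa using hEq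
    exact h12 (congrArg Prod.snd this)
  · intro s hs
    rcases Finset.mem_insert.1 hs with rfl | hs
    · exact ⟨(N2 G _ _).2 rfl, (N4 G _ _).2 ⟨rfl, Or.inl ⟨rfl, h10.symm ∘ Eq.symm⟩⟩⟩
    · rcases Finset.mem_singleton.1 hs with rfl
      exact ⟨(N2 G _ _).2 rfl, (N4 G _ _).2 ⟨rfl, Or.inl ⟨rfl, h20.symm ∘ Eq.symm⟩⟩⟩
  · intro s hs u hu hne hAdj
    have hs' : s = Sum.inr (Sum.inl (t, 1)) ∨ s = Sum.inr (Sum.inl (t, 2)) := by simpa using hs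
    have hu' : u = Sum.inr (Sum.inl (t, 1)) ∨ u = Sum.inr (Sum.inl (t, 2)) := by simpa using hu
    rcases hs' with rfl | rfl <;> rcases hu' with rfl | rfl
    · exact hne rfl
    · obtain ⟨-, hcond⟩ := (N4 G _ _).1 hAdj
      rcases hcond with ⟨hc, -⟩ | ⟨hc, -⟩
      · exact h10 hc
      · exact h20 hc
    · obtain ⟨-, hcond⟩ := (N4 G _ _).1 hAdj
      rcases hcond with ⟨hc, -⟩ | ⟨hc, -⟩
      · exact h20 hc
      · exact h10 hc
    · exact hne rfl
  · rcases hz with rfl | rfl | rfl | rfl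
    · exact Or.inl rfl
    · exact Or.inr (Or.inl rfl)
    · exact Or.inr (Or.inr (Finset.mem_insert_self _ _))
    · exact Or.inr (Or.inr (Finset.mem_insert_of_mem (Finset.mem_singleton_self _)))

lemma lonely_chimney (s : {t : V × V × V // LonelyT G t.1 t.2.1 t.2.2}) (z : Wt G)
    (hz : z = Sum.inl s.1.1 ∨ z = Sum.inl s.1.2.1 ∨ z = Sum.inl s.1.2.2 ∨
      z = Sum.inr (Sum.inr s)) : InChimneyCopy (Gext G) z := by
  classical
  obtain ⟨o1, o2, amx, amy, axy, U1, U2, U3⟩ := s.2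
  have hmx : s.1.1 ≠ s.1.2.1 := o1.ne
  have hmy : s.1.1 ≠ s.1.2.2 := (o1.trans o2).ne
  refine chimney_of (Gext G) (Sum.inl s.1.2.1) (Sum.inl s.1.2.2)
    {Sum.inl s.1.1, Sum.inr (Sum.inr s)}
    ((N1 G _ _).2 axy) ?_ ?_ ?_ ?_ ?_ z ?_
  · intro hq
    rcases Finset.mem_insert.1 hq with hEq | hEq
    · exact hmx (by simpa using hEq.symm)
    · simp at hEq
  · intro hq
    rcases Finset.mem_insert.1 hq with hEq | hEq
    · exact hmy (by simpa using hEq.symm)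
    · simp at hEq
  · exact Finset.one_lt_card.2 ⟨_, Finset.mem_insert_self _ _, _,
      Finset.mem_insert_of_mem (Finset.mem_singleton_self _), by simp⟩
  · intro u hu
    rcases Finset.mem_insert.1 hu with rfl | hu
    · exact ⟨(N1 G _ _).2 amx.symm, (N1 G _ _).2 amy.symm⟩
    · rcases Finset.mem_singleton.1 hu with rfl
      exact ⟨(N3 G _ _).2 (Or.inl rfl), (N3 G _ _).2 (Or.inr rfl)⟩
  · intro u hu w hw hne hAdj
    have hu' : u = Sum.inl s.1.1 ∨ u = Sum.inr (Sum.inr s) := by simpa using hu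
    have hw' : w = Sum.inl s.1.1 ∨ w = Sum.inr (Sum.inr s) := by simpa using hw
    rcases hu' with rfl | rfl <;> rcases hw' with rfl | rfl
    · exact hne rfl
    · rcases (N3 G _ _).1 hAdj with e | e
      · exact hmx e
      · exact hmy e
    · rcases (N3 G _ _).1 hAdj.symm with e | e
      · exact hmx e
      · exact hmy e
    · exact hne rfl
  · rcases hz with rfl | rfl | rfl | rfl
    · exact Or.inr (Or.inr (Finset.mem_insert_self _ _))
    · exact Or.inl rfl
    · exact Or.inr (Or.inl rfl)
    · exact Or.inr (Or.inr (Finset.mem_insert_of_mem (Finset.mem_singleton_self _)))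

lemma good_ext [Fintype V] (h : ¬HasBow G) : Good (Gext G) := by
  intro v
  rcases v with v0 | p | s
  · rcases classify G h v0 with hT | hK | hC | ⟨m, x, y, hL, hv⟩
    · exact Or.inl (gadget_chimney ⟨v0, hT⟩ _ (Or.inl rfl))
    · exact Or.inr (k4_lift hK)
    · exact Or.inl (chim_lift hC)
    · refine Or.inl (lonely_chimney ⟨(m, x, y), hL⟩ _ ?_)
      rcases hv with rfl | rfl | rfl
      · exact Or.inl rfl
      · exact Or.inr (Or.inl rfl)
      · exact Or.inr (Or.inr (Or.inl rfl))
  · obtain ⟨t, i⟩ := p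
    refine Or.inl (gadget_chimney t _ ?_)
    fin_cases i
    · exact Or.inr (Or.inl rfl)
    · exact Or.inr (Or.inr (Or.inl rfl))
    · exact Or.inr (Or.inr (Or.inr rfl))
  · exact Or.inl (lonely_chimney s _ (Or.inr (Or.inr (Or.inr rfl))))
end G

/-- Every finite bowtie-free graph is an induced subgraph of a finite good bowtie-free graph. -/
theorem stmt0 {V : Type} [Fintype V] (G : SimpleGraph V) (hG : BowtieFree G) :
    ∃ (W : Type) (_ : Fintype W) (G' : SimpleGraph W) (f : V ↪ W),
      BowtieFree G' ∧ Good G' ∧ ∀ a b, G.Adj a b ↔ G'.Adj (f a) (f b) := by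
  letI := Classical.decEq V
  letI : LinearOrder V := LinearOrder.lift' (Fintype.equivFin V) (Fintype.equivFin V).injective
  have h : ¬HasBow G := (bowtieFree_iff G).1 hG
  exact ⟨Wt G, inferInstance, Gext G, ⟨Sum.inl, Sum.inl_injective⟩,
    (bowtieFree_iff _).2 (next_nobow h), good_ext h,
    fun a b => (N1 G a b).symm⟩
end

section
/- In a bowtie-free graph G, if a triangle T = {v1,v2,v3} is not contained in any 2-chimney and not contained in any K_4, then adding a new vertex v4 adjacent exactly to v1 and v2 (creating the new triangle {v1,v2,v4}) yields a graph that is still bowtie-free. -/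
/-- K4 or chimney from a vertex z adjacent to v2 and v3 outside the triangle. -/
lemma aux_z {V : Type} (G : SimpleGraph V) (v1 v2 v3 : V)
    (h12 : G.Adj v1 v2) (h13 : G.Adj v1 v3) (h23 : G.Adj v2 v3)
    (hch : ¬∃ f : (Fin 2 ⊕ Fin 2) → V, Function.Injective f ∧
      (∀ a b, (chimney 2).Adj a b ↔ G.Adj (f a) (f b)) ∧
      ({v1, v2, v3} : Set V) ⊆ Set.range f)
    (hk4 : ¬∃ f : Fin 4 → V, Function.Injective f ∧
      (∀ i j, i ≠ j → G.Adj (f i) (f j)) ∧ ({v1, v2, v3} : Set V) ⊆ Set.range f)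
    (z : V) (hz1 : z ≠ v1) (hz2 : z ≠ v2) (hz3 : z ≠ v3)
    (h2z : G.Adj v2 z) (h3z : G.Adj v3 z) : False := by
  by_cases hadj : G.Adj v1 z
  · apply hk4
    refine ⟨![v1, v2, v3, z], ?_, ?_, ?_⟩
    · intro i j hij
      fin_cases i <;> fin_cases j <;> simp at hij ⊢ <;>
        · try exact absurd hij h12.ne
          try exact absurd hij h12.ne'
          try exact absurd hij h13.ne
          try exact absurd hij h13.ne'
          try exact absurd hij h23.ne
          try exact absurd hij h23.ne'
          try exact absurd hij hz1
          try exact absurd hij.symm hz1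
          try exact absurd hij hz2
          try exact absurd hij.symm hz2
          try exact absurd hij hz3
          try exact absurd hij.symm hz3
    · intro i j hij
      fin_cases i <;> fin_cases j <;> simp <;>
        · try exact absurd rfl hij
          try exact h12
          try exact h12.symm
          try exact h13
          try exact h13.symm
          try exact h23
          try exact h23.symm
          try exact hadj
          try exact hadj.symm
          try exact h2z
          try exact h2z.symm
          try exact h3z
          try exact h3z.symm
    · intro u hu
      rcases hu with rfl | rfl | rfl
      · exact ⟨0, rfl⟩
      · exact ⟨1, rfl⟩
      · exact ⟨2, rfl⟩
  · apply hch
    refine ⟨Sum.elim ![v2, v3] ![v1, z], ?_, ?_, ?_⟩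
    · intro a b hab
      rcases a with a | a <;> rcases b with b | b <;> fin_cases a <;> fin_cases b <;>
        simp at hab ⊢ <;>
        · try exact absurd hab h12.ne
          try exact absurd hab h12.ne'
          try exact absurd hab h13.ne
          try exact absurd hab h13.ne'
          try exact absurd hab h23.ne
          try exact absurd hab h23.ne'
          try exact absurd hab hz1
          try exact absurd hab.symm hz1
          try exact absurd hab hz2
          try exact absurd hab.symm hz2
          try exact absurd hab hz3
          try exact absurd hab.symm hz3
    · intro a b
      rcases a with a | a <;> rcases b with b | b <;> fin_cases a <;> fin_cases b <;>
        simp [chimney] <;>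
        · try exact h12
          try exact h12.symm
          try exact h13
          try exact h13.symm
          try exact h23
          try exact h23.symm
          try exact h2z
          try exact h2z.symm
          try exact h3z
          try exact h3z.symm
          try exact fun h => hadj h
          try exact fun h => hadj h.symm
    · intro u hu
      rcases hu with rfl | rfl | rfl
      · exact ⟨Sum.inr 0, rfl⟩
      · exact ⟨Sum.inl 0, rfl⟩
      · exact ⟨Sum.inl 1, rfl⟩

lemma key0 {V : Type} (G : SimpleGraph V) (hG : BowtieFree G) (v1 v2 v3 : V)
    (h12 : G.Adj v1 v2) (h13 : G.Adj v1 v3) (h23 : G.Adj v2 v3)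
    (hch : ¬∃ f : (Fin 2 ⊕ Fin 2) → V, Function.Injective f ∧
      (∀ a b, (chimney 2).Adj a b ↔ G.Adj (f a) (f b)) ∧
      ({v1, v2, v3} : Set V) ⊆ Set.range f)
    (hk4 : ¬∃ f : Fin 4 → V, Function.Injective f ∧
      (∀ i j, i ≠ j → G.Adj (f i) (f j)) ∧ ({v1, v2, v3} : Set V) ⊆ Set.range f)
    (x y : V) (hx1 : x ≠ v1) (hx2 : x ≠ v2) (hy1 : y ≠ v1) (hy2 : y ≠ v2)
    (hxy : x ≠ y) (h2x : G.Adj v2 x) (h2y : G.Adj v2 y) (hxyA : G.Adj x y) : False := by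
  by_cases hx3 : x = v3
  · exact aux_z G v1 v2 v3 h12 h13 h23 hch hk4 y hy1 hy2 (fun h => hxy (hx3.trans h.symm))
      h2y (hx3 ▸ hxyA)
  · by_cases hy3 : y = v3
    · exact aux_z G v1 v2 v3 h12 h13 h23 hch hk4 x hx1 hx2 hx3 h2x (hy3 ▸ hxyA.symm)
    · apply hG
      refine ⟨![v1, v3, v2, x, y], ?_, ?_⟩
      · intro i j hij
        fin_cases i <;> fin_cases j <;> simp at hij ⊢ <;>
          · try exact absurd hij h12.ne
            try exact absurd hij h12.ne'
            try exact absurd hij h13.ne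
            try exact absurd hij h13.ne'
            try exact absurd hij h23.ne
            try exact absurd hij h23.ne'
            try exact absurd hij hx1
            try exact absurd hij.symm hx1
            try exact absurd hij hx2
            try exact absurd hij.symm hx2
            try exact absurd hij hx3
            try exact absurd hij.symm hx3
            try exact absurd hij hy1
            try exact absurd hij.symm hy1
            try exact absurd hij hy2
            try exact absurd hij.symm hy2
            try exact absurd hij hy3
            try exact absurd hij.symm hy3
            try exact absurd hij hxy
            try exact absurd hij.symm hxy
      · intro a b hab
        fin_cases a <;> fin_cases b <;> simp [bowtie] at hab ⊢ <;>
          · try exact absurd hab (by decide)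
            try exact h12
            try exact h12.symm
            try exact h13
            try exact h13.symm
            try exact h23
            try exact h23.symm
            try exact h2x
            try exact h2x.symm
            try exact h2y
            try exact h2y.symm
            try exact hxyA
            try exact hxyA.symm

lemma finish0 {V : Type} (G : SimpleGraph V) (hG : BowtieFree G) (v1 v2 v3 : V)
    (h12 : G.Adj v1 v2) (h13 : G.Adj v1 v3) (h23 : G.Adj v2 v3)
    (hch : ¬∃ f : (Fin 2 ⊕ Fin 2) → V, Function.Injective f ∧
      (∀ a b, (chimney 2).Adj a b ↔ G.Adj (f a) (f b)) ∧
      ({v1, v2, v3} : Set V) ⊆ Set.range f)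
    (hk4 : ¬∃ f : Fin 4 → V, Function.Injective f ∧
      (∀ i j, i ≠ j → G.Adj (f i) (f j)) ∧ ({v1, v2, v3} : Set V) ⊆ Set.range f)
    (u1 u2 : V ⊕ Unit) (x y : V)
    (h1 : u1 = Sum.inl v1 ∨ u1 = Sum.inl v2)
    (h2 : u2 = Sum.inl v1 ∨ u2 = Sum.inl v2)
    (hne : u1 ≠ u2)
    (hx1 : Sum.inl x ≠ u1) (hx2 : Sum.inl x ≠ u2)
    (hy1 : Sum.inl y ≠ u1) (hy2 : Sum.inl y ≠ u2)
    (hxy : x ≠ y)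
    (h2x : ∀ b : V, u2 = Sum.inl b → G.Adj b x)
    (h2y : ∀ b : V, u2 = Sum.inl b → G.Adj b y)
    (hxyA : G.Adj x y) : False := by
  rcases h2 with h2 | h2
  · -- u2 = inl v1, so the shared vertex is v1; swap roles of v1 and v2
    have hu1 : u1 = Sum.inl v2 := by
      rcases h1 with h1 | h1
      · exact absurd (h1.trans h2.symm) hne
      · exact h1
    have hch' : ¬∃ f : (Fin 2 ⊕ Fin 2) → V, Function.Injective f ∧
        (∀ a b, (chimney 2).Adj a b ↔ G.Adj (f a) (f b)) ∧
        ({v2, v1, v3} : Set V) ⊆ Set.range f := by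
      rintro ⟨f, hf1, hf2, hf3⟩
      exact hch ⟨f, hf1, hf2, by rwa [Set.insert_comm] at hf3⟩
    have hk4' : ¬∃ f : Fin 4 → V, Function.Injective f ∧
        (∀ i j, i ≠ j → G.Adj (f i) (f j)) ∧ ({v2, v1, v3} : Set V) ⊆ Set.range f := by
      rintro ⟨f, hf1, hf2, hf3⟩
      exact hk4 ⟨f, hf1, hf2, by rwa [Set.insert_comm] at hf3⟩
    refine key0 G hG v2 v1 v3 h12.symm h23 h13 hch' hk4' x y ?_ ?_ ?_ ?_ hxy
      (h2x v1 h2) (h2y v1 h2) hxyA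
    · intro h; exact hx1 (by rw [h, hu1])
    · intro h; exact hx2 (by rw [h, h2])
    · intro h; exact hy1 (by rw [h, hu1])
    · intro h; exact hy2 (by rw [h, h2])
  · have hu1 : u1 = Sum.inl v1 := by
      rcases h1 with h1 | h1
      · exact h1
      · exact absurd (h1.trans h2.symm) hne
    refine key0 G hG v1 v2 v3 h12 h13 h23 hch hk4 x y ?_ ?_ ?_ ?_ hxy
      (h2x v2 h2) (h2y v2 h2) hxyA
    · intro h; exact hx1 (by rw [h, hu1])
    · intro h; exact hx2 (by rw [h, h2])
    · intro h; exact hy1 (by rw [h, hu1])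
    · intro h; exact hy2 (by rw [h, h2])

/-- If in a bowtie-free graph `G` the triangle `{v1,v2,v3}` is contained in no `2`-chimney
and no `K₄`, then adding a new vertex adjacent exactly to `v1` and `v2` keeps the graph
bowtie-free. -/
theorem stmt1 {V : Type} (G : SimpleGraph V) (hG : BowtieFree G) (v1 v2 v3 : V)
    (h12 : G.Adj v1 v2) (h13 : G.Adj v1 v3) (h23 : G.Adj v2 v3)
    (hch : ¬∃ f : (Fin 2 ⊕ Fin 2) → V, Function.Injective f ∧
      (∀ a b, (chimney 2).Adj a b ↔ G.Adj (f a) (f b)) ∧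
      ({v1, v2, v3} : Set V) ⊆ Set.range f)
    (hk4 : ¬∃ f : Fin 4 → V, Function.Injective f ∧
      (∀ i j, i ≠ j → G.Adj (f i) (f j)) ∧ ({v1, v2, v3} : Set V) ⊆ Set.range f) :
    BowtieFree (SimpleGraph.fromRel (fun a b : V ⊕ Unit =>
      (∃ x y, a = Sum.inl x ∧ b = Sum.inl y ∧ G.Adj x y) ∨
      (a = Sum.inr () ∧ (b = Sum.inl v1 ∨ b = Sum.inl v2)))) := by
  rintro ⟨f, hinj, hmap⟩
  -- basic facts about the extended graph
  have hInl : ∀ x y : V, (SimpleGraph.fromRel (fun a b : V ⊕ Unit =>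
      (∃ x y, a = Sum.inl x ∧ b = Sum.inl y ∧ G.Adj x y) ∨
      (a = Sum.inr () ∧ (b = Sum.inl v1 ∨ b = Sum.inl v2)))).Adj (Sum.inl x) (Sum.inl y) →
      G.Adj x y := by
    intro x y h
    rw [SimpleGraph.fromRel_adj] at h
    rcases h.2 with (⟨a, b, ha, hb, hab⟩ | ⟨h', _⟩) | (⟨a, b, ha, hb, hab⟩ | ⟨h', _⟩)
    · cases ha; cases hb; exact hab
    · exact absurd h' (by simp)
    · cases ha; cases hb; exact hab.symm
    · exact absurd h' (by simp)
  have hW : ∀ b : V ⊕ Unit, (SimpleGraph.fromRel (fun a b : V ⊕ Unit =>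
      (∃ x y, a = Sum.inl x ∧ b = Sum.inl y ∧ G.Adj x y) ∨
      (a = Sum.inr () ∧ (b = Sum.inl v1 ∨ b = Sum.inl v2)))).Adj (Sum.inr ()) b →
      b = Sum.inl v1 ∨ b = Sum.inl v2 := by
    intro b h
    rw [SimpleGraph.fromRel_adj] at h
    rcases h.2 with (⟨a, c, ha, _, _⟩ | ⟨_, h'⟩) | (⟨a, c, _, hc, _⟩ | ⟨h', _⟩)
    · exact absurd ha (by simp)
    · exact h'
    · exact absurd hc (by simp)
    · exact absurd h' h.1.symm
  by_cases hw : ∃ i, f i = Sum.inr ()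
  · obtain ⟨i, hi⟩ := hw
    -- bowtie adjacency facts
    have b01 : bowtie.Adj 0 1 := by simp [bowtie] <;> decide
    have b02 : bowtie.Adj 0 2 := by simp [bowtie] <;> decide
    have b10 : bowtie.Adj 1 0 := by simp [bowtie] <;> decide
    have b12 : bowtie.Adj 1 2 := by simp [bowtie] <;> decide
    have b20 : bowtie.Adj 2 0 := by simp [bowtie] <;> decide
    have b21 : bowtie.Adj 2 1 := by simp [bowtie] <;> decide
    have b23 : bowtie.Adj 2 3 := by simp [bowtie] <;> decide
    have b24 : bowtie.Adj 2 4 := by simp [bowtie] <;> decide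
    have b32 : bowtie.Adj 3 2 := by simp [bowtie] <;> decide
    have b42 : bowtie.Adj 4 2 := by simp [bowtie] <;> decide
    have b34 : bowtie.Adj 3 4 := by simp [bowtie] <;> decide
    have b43 : bowtie.Adj 4 3 := by simp [bowtie] <;> decide
    -- every f value other than the one hitting inr () is an inl
    have hval : ∀ j : Fin 5, j ≠ i → ∃ x : V, f j = Sum.inl x := by
      intro j hj
      rcases h : f j with x | u
      · exact ⟨x, rfl⟩
      · cases u; exact absurd (hinj (h.trans hi.symm)) hj
    have hne2 : i ≠ 2 := by
      intro h; subst h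
      have m0 := hW _ (hi ▸ hmap 2 0 b20)
      have m1 := hW _ (hi ▸ hmap 2 1 b21)
      have m3 := hW _ (hi ▸ hmap 2 3 b23)
      rcases m0 with m0 | m0 <;> rcases m1 with m1 | m1 <;> rcases m3 with m3 | m3 <;>
        · try exact absurd (hinj (m0.trans m1.symm)) (by decide)
          try exact absurd (hinj (m0.trans m3.symm)) (by decide)
          try exact absurd (hinj (m1.trans m3.symm)) (by decide)
    -- general finishing step given the index data
    have main : ∀ j p q : Fin 5, j ≠ i → 2 ≠ i → p ≠ i → q ≠ i → j ≠ 2 → p ≠ 2 → q ≠ 2 →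
        p ≠ j → q ≠ j → p ≠ q →
        bowtie.Adj i j → bowtie.Adj i 2 → bowtie.Adj 2 p → bowtie.Adj 2 q →
        bowtie.Adj p q → False := by
      intro j p q hji h2i hpi hqi hj2 hp2 hq2 hpj hqj hpq bij bi2 b2p b2q bpq
      obtain ⟨x, hx⟩ := hval p hpi
      obtain ⟨y, hy⟩ := hval q hqi
      have h1 := hW _ (hi ▸ hmap i j bij)
      have h2 := hW _ (hi ▸ hmap i 2 bi2)
      refine finish0 G hG v1 v2 v3 h12 h13 h23 hch hk4 (f j) (f 2) x y h1 h2
        (fun h => hj2 (hinj h)) ?_ ?_ ?_ ?_ ?_ ?_ ?_ ?_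
      · rw [← hx]; exact fun h => hpj (hinj h)
      · rw [← hx]; exact fun h => hp2 (hinj h)
      · rw [← hy]; exact fun h => hqj (hinj h)
      · rw [← hy]; exact fun h => hq2 (hinj h)
      · intro h; rw [h] at hx; rw [← hy] at hx; exact hpq (hinj hx)
      · intro b hb; exact hInl b x (by rw [← hb, ← hx]; exact hmap 2 p b2p)
      · intro b hb; exact hInl b y (by rw [← hb, ← hy]; exact hmap 2 q b2q)
      · exact hInl x y (by rw [← hx, ← hy]; exact hmap p q bpq)
    fin_cases i
    · exact main 1 3 4 (by decide) (by decide) (by decide) (by decide) (by decide)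
        (by decide) (by decide) (by decide) (by decide) (by decide) b01 b02 b23 b24 b34
    · exact main 0 3 4 (by decide) (by decide) (by decide) (by decide) (by decide)
        (by decide) (by decide) (by decide) (by decide) (by decide) b10 b12 b23 b24 b34
    · exact absurd rfl hne2
    · exact main 4 0 1 (by decide) (by decide) (by decide) (by decide) (by decide)
        (by decide) (by decide) (by decide) (by decide) (by decide) b34 b32 b20 b21 b01
    · exact main 3 0 1 (by decide) (by decide) (by decide) (by decide) (by decide)
        (by decide) (by decide) (by decide) (by decide) (by decide) b43 b42 b20 b21 b01
  · push_neg at hw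
    have hval : ∀ j : Fin 5, ∃ x : V, f j = Sum.inl x := by
      intro j
      rcases h : f j with x | u
      · exact ⟨x, rfl⟩
      · cases u; exact absurd h (hw j)
    choose g hg using hval
    apply hG
    refine ⟨g, ?_, ?_⟩
    · intro a b hab
      apply hinj
      rw [hg a, hg b, hab]
    · intro a b hab
      exact hInl _ _ (by rw [← hg a, ← hg b]; exact hmap a b hab)
end

section
/- Adding to a graph G a disjoint copy of the 2-chimney Ch_2 and identifying a single vertex v of G with one vertex of the Ch_2 preserves bowtie-freeness: if G is bowtie-free then the resulting graph is bowtie-free, provided v is not contained in any triangle of G. -/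
/-- The glued graph: `G` plus a fresh chimney on `v`. -/
def glue {V : Type} (G : SimpleGraph V) (v : V) : SimpleGraph (V ⊕ Fin 3) :=
  SimpleGraph.fromRel (fun a b : V ⊕ Fin 3 =>
      (∃ x y, a = Sum.inl x ∧ b = Sum.inl y ∧ G.Adj x y) ∨
      (a = Sum.inl v ∧ ∃ i, b = Sum.inr i) ∨
      (a = Sum.inr 0 ∧ (b = Sum.inr 1 ∨ b = Sum.inr 2)))

section Glue
variable {V : Type} {G : SimpleGraph V} {v : V}

lemma glue_ll {x y : V} : (glue G v).Adj (Sum.inl x) (Sum.inl y) ↔ G.Adj x y := by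
  simp [glue, SimpleGraph.fromRel_adj]
  constructor
  · rintro ⟨h, h' | h'⟩
    · exact h'
    · exact h'.symm
  · exact fun h => ⟨h.ne, Or.inl h⟩

lemma glue_lr {x : V} {j : Fin 3} : (glue G v).Adj (Sum.inl x) (Sum.inr j) ↔ x = v := by
  simp [glue, SimpleGraph.fromRel_adj]

lemma glue_rr {i j : Fin 3} : (glue G v).Adj (Sum.inr i) (Sum.inr j) ↔
    (i = 0 ∧ j ≠ 0) ∨ (j = 0 ∧ i ≠ 0) := by
  fin_cases i <;> fin_cases j <;> simp [glue, SimpleGraph.fromRel_adj]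

/-- A vertex of the chimney part (including the glue vertex). -/
def small (v : V) (t : V ⊕ Fin 3) : Prop :=
  t = Sum.inl v ∨ ∃ j : Fin 3, t = Sum.inr j

/-- Classification of triangles in the glued graph. -/
lemma tri (hv : ¬∃ x y, G.Adj v x ∧ G.Adj v y ∧ G.Adj x y)
    {p q r : V ⊕ Fin 3} (hpq : (glue G v).Adj p q) (hpr : (glue G v).Adj p r)
    (hqr : (glue G v).Adj q r) :
    (∃ x y z, p = Sum.inl x ∧ q = Sum.inl y ∧ r = Sum.inl z ∧
      x ≠ v ∧ y ≠ v ∧ z ≠ v ∧ G.Adj x y ∧ G.Adj x z ∧ G.Adj y z) ∨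
    ((small v p ∧ small v q ∧ small v r) ∧
     (p = Sum.inl v ∨ q = Sum.inl v ∨ r = Sum.inl v) ∧
     (p = Sum.inr 0 ∨ q = Sum.inr 0 ∨ r = Sum.inr 0)) := by
  rcases p with x | i <;> rcases q with y | j <;> rcases r with z | k
  · -- all inl
    rw [glue_ll] at hpq hpr hqr
    have hx : x ≠ v := by rintro rfl; exact hv ⟨y, z, hpq, hpr, hqr⟩
    have hy : y ≠ v := by rintro rfl; exact hv ⟨x, z, hpq.symm, hqr, hpr⟩
    have hz : z ≠ v := by rintro rfl; exact hv ⟨x, y, hpr.symm, hqr.symm, hpq⟩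
    exact Or.inl ⟨x, y, z, rfl, rfl, rfl, hx, hy, hz, hpq, hpr, hqr⟩
  · -- inl inl inr
    obtain rfl := glue_lr.mp hpr
    obtain rfl := glue_lr.mp hqr
    exact absurd rfl (glue_ll.mp hpq).ne
  · -- inl inr inl
    obtain rfl := glue_lr.mp hpq
    obtain rfl := glue_lr.mp hqr.symm
    exact absurd rfl (glue_ll.mp hpr).ne
  · -- inl inr inr
    obtain rfl := glue_lr.mp hpq
    refine Or.inr ⟨⟨Or.inl rfl, Or.inr ⟨j, rfl⟩, Or.inr ⟨k, rfl⟩⟩, Or.inl rfl, ?_⟩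
    rcases glue_rr.mp hqr with ⟨rfl, _⟩ | ⟨rfl, _⟩
    · exact Or.inr (Or.inl rfl)
    · exact Or.inr (Or.inr rfl)
  · -- inr inl inl
    obtain rfl := glue_lr.mp hpq.symm
    obtain rfl := glue_lr.mp hpr.symm
    exact absurd rfl (glue_ll.mp hqr).ne
  · -- inr inl inr
    obtain rfl := glue_lr.mp hpq.symm
    refine Or.inr ⟨⟨Or.inr ⟨i, rfl⟩, Or.inl rfl, Or.inr ⟨k, rfl⟩⟩, Or.inr (Or.inl rfl), ?_⟩
    rcases glue_rr.mp hpr with ⟨rfl, _⟩ | ⟨rfl, _⟩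
    · exact Or.inl rfl
    · exact Or.inr (Or.inr rfl)
  · -- inr inr inl
    obtain rfl := glue_lr.mp hpr.symm
    refine Or.inr ⟨⟨Or.inr ⟨i, rfl⟩, Or.inr ⟨j, rfl⟩, Or.inl rfl⟩, Or.inr (Or.inr rfl), ?_⟩
    rcases glue_rr.mp hpq with ⟨rfl, _⟩ | ⟨rfl, _⟩
    · exact Or.inl rfl
    · exact Or.inr (Or.inl rfl)
  · -- all inr : impossible
    exfalso
    rcases glue_rr.mp hpq with ⟨hi, hj⟩ | ⟨hj, hi⟩ <;>
      rcases glue_rr.mp hqr with ⟨hj', hk⟩ | ⟨hk, hj'⟩ <;>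
      rcases glue_rr.mp hpr with ⟨hi', hk'⟩ | ⟨hk', hi'⟩ <;> simp_all

end Glue

/-- Gluing a fresh copy of the 2-chimney `Ch₂` (vertices `a,b,c,d`, edges
`ab, ac, bc, ad, bd`) onto a bowtie-free graph `G` by identifying `a` with a vertex `v`
of `G` lying in no triangle preserves bowtie-freeness.  The three fresh vertices are
`Sum.inr 0 = b`, `Sum.inr 1 = c`, `Sum.inr 2 = d`. -/
theorem stmt2 {V : Type} (G : SimpleGraph V) (hG : BowtieFree G) (v : V)
    (hv : ¬∃ x y, G.Adj v x ∧ G.Adj v y ∧ G.Adj x y) :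
    BowtieFree (SimpleGraph.fromRel (fun a b : V ⊕ Fin 3 =>
      (∃ x y, a = Sum.inl x ∧ b = Sum.inl y ∧ G.Adj x y) ∨
      (a = Sum.inl v ∧ ∃ i, b = Sum.inr i) ∨
      (a = Sum.inr 0 ∧ (b = Sum.inr 1 ∨ b = Sum.inr 2)))) := by
  show BowtieFree (glue G v)
  rintro ⟨f, hinj, hhom⟩
  have h01 := hhom 0 1 (by simp [bowtie, SimpleGraph.fromRel_adj] <;> decide)
  have h02 := hhom 0 2 (by simp [bowtie, SimpleGraph.fromRel_adj] <;> decide)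
  have h12 := hhom 1 2 (by simp [bowtie, SimpleGraph.fromRel_adj] <;> decide)
  have h23 := hhom 2 3 (by simp [bowtie, SimpleGraph.fromRel_adj] <;> decide)
  have h24 := hhom 2 4 (by simp [bowtie, SimpleGraph.fromRel_adj] <;> decide)
  have h34 := hhom 3 4 (by simp [bowtie, SimpleGraph.fromRel_adj] <;> decide)
  have t1 := tri hv h01 h02 h12
  have t2 := tri hv h23 h24 h34
  rcases t1 with ⟨x, y, z, e0, e1, e2, hxv, hyv, hzv, a01, a02, a12⟩ |
      ⟨⟨s0, s1, s2⟩, hv1, h01'⟩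
  · rcases t2 with ⟨z', w, u, e2', e3, e4, _, hwv, huv, a23, a24, a34⟩ |
        ⟨⟨s2', _, _⟩, _, _⟩
    · -- both triangles in G : bowtie in G
      have hzz : z = z' := Sum.inl.inj (e2.symm.trans e2')
      subst hzz
      set g : Fin 5 → V := ![x, y, z, w, u] with hg
      have hfg : ∀ i : Fin 5, f i = Sum.inl (g i) := by
        intro i
        fin_cases i <;> simp [hg] <;> assumption
      refine hG ⟨g, fun i j hij => hinj ?_, fun a b hab => ?_⟩
      · rw [hfg i, hfg j, hij]
      · have h := hhom a b hab
        rw [hfg a, hfg b, glue_ll] at h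
        exact h
    · -- f 2 is both a G-vertex ≠ v and a chimney vertex : impossible
      rcases s2' with h | ⟨j, h⟩
      · rw [e2] at h; exact hzv (Sum.inl.inj h)
      · rw [e2] at h; simp at h
  · rcases t2 with ⟨z', w, u, e2', _, _, hz'v, _, _, _, _, _⟩ |
        ⟨⟨_, _, _⟩, hv2, h02'⟩
    · rcases s2 with h | ⟨j, h⟩
      · rw [e2'] at h; exact hz'v (Sum.inl.inj h)
      · rw [e2'] at h; simp at h
    · -- both chimney triangles : they share two vertices, contradiction
      have e2v : f 2 = Sum.inl v := by
        rcases hv1 with h | h | h <;> rcases hv2 with h' | h' | h' <;>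
          first
            | assumption
            | exact absurd (hinj (h.trans h'.symm)) (by decide)
      have e20 : f 2 = Sum.inr 0 := by
        rcases h01' with h | h | h <;> rcases h02' with h' | h' | h' <;>
          first
            | assumption
            | exact absurd (hinj (h.trans h'.symm)) (by decide)
      rw [e2v] at e20
      simp at e20
end

section
/- Let K be a free amalgamation class of L-structures in which some structure A has two vertices u, v with Cl_A(u) not isomorphic to Cl_A(v). Then the class of all (freely) ordered structures in K does not have the ordering property: there exists an ordered structure A⃗ such that for every B ∈ K some ordering of B contains no copy of A⃗. -/
/-- A language with relation symbols and partial function symbols; functions have a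
domain arity and a range arity (values are sets of `fnRng F` vertices). -/
structure PLang where
  Rel : Type
  relAr : Rel → ℕ
  Fn : Type
  fnDom : Fn → ℕ
  fnRng : Fn → ℕ

/-- A structure for a language with relations and partial functions: each function symbol
is interpreted as a partial map from `fnDom`-tuples to (unordered) sets of vertices,
`none` meaning "undefined". -/
structure PStruc (L : PLang) (V : Type) where
  rel : ∀ R : L.Rel, Set ((Fin (L.relAr R)) → V)
  fn : ∀ F : L.Fn, ((Fin (L.fnDom F)) → V) → Option (Set V)

/-- `S` is (the vertex set of) a substructure of `A`: it is closed under all partial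
functions of `A`. -/
def PStruc.ClosedIn {L : PLang} {V : Type} (A : PStruc L V) (S : Set V) : Prop :=
  ∀ (F : L.Fn) (t : Fin (L.fnDom F) → V), (∀ i, t i ∈ S) →
    ∀ s : Set V, A.fn F t = some s → s ⊆ S

/-- The closure of `B` in `A`: the smallest substructure of `A` containing `B`. -/
def PStruc.Cl {L : PLang} {V : Type} (A : PStruc L V) (B : Set V) : Set V :=
  ⋂₀ {S : Set V | A.ClosedIn S ∧ B ⊆ S}

/-- An embedding of structures with relations and partial functions: injective, preserves
and reflects relations, preserves and reflects function domains, and commutes with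
function values. -/
def IsEmb {L : PLang} {α β : Type} (A : PStruc L α) (B : PStruc L β) (f : α → β) : Prop :=
  Function.Injective f ∧
  (∀ (R : L.Rel) (t : Fin (L.relAr R) → α),
    t ∈ A.rel R ↔ (fun i => f (t i)) ∈ B.rel R) ∧
  (∀ (F : L.Fn) (t : Fin (L.fnDom F) → α),
    ((A.fn F t).isSome ↔ (B.fn F (fun i => f (t i))).isSome) ∧
    (∀ s, A.fn F t = some s → B.fn F (fun i => f (t i)) = some (f '' s)))

/-- `C`, with embeddings `β1, β2`, is a free amalgam of `B1` and `B2` over `A`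
(with respect to the embeddings `α1 : A → B1`, `α2 : A → B2`): the two copies meet
exactly in the copy of `A`, they cover `C`, and no relational tuple or
function-domain tuple of `C` uses vertices of both sides. -/
def IsFreeAmalgam {L : PLang} {a b1 b2 c : ℕ} (_A : PStruc L (Fin a))
    (B1 : PStruc L (Fin b1)) (B2 : PStruc L (Fin b2)) (C : PStruc L (Fin c))
    (α1 : Fin a → Fin b1) (α2 : Fin a → Fin b2)
    (β1 : Fin b1 → Fin c) (β2 : Fin b2 → Fin c) : Prop :=
  IsEmb B1 C β1 ∧ IsEmb B2 C β2 ∧ (∀ x, β1 (α1 x) = β2 (α2 x)) ∧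
  (∀ x1 x2, β1 x1 = β2 x2 → ∃ x, x1 = α1 x ∧ x2 = α2 x) ∧
  (∀ z, z ∈ Set.range β1 ∪ Set.range β2) ∧
  (∀ (R : L.Rel) (t : Fin (L.relAr R) → Fin c), t ∈ C.rel R →
    (∀ i, t i ∈ Set.range β1) ∨ (∀ i, t i ∈ Set.range β2)) ∧
  (∀ (F : L.Fn) (t : Fin (L.fnDom F) → Fin c), (C.fn F t).isSome →
    (∀ i, t i ∈ Set.range β1) ∨ (∀ i, t i ∈ Set.range β2))

/-- A free amalgamation class of finite structures: hereditary (closed under substructures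
up to isomorphism), joint embedding, and free amalgamation. -/
def FreeAmalgClass {L : PLang} (K : ∀ n : ℕ, PStruc L (Fin n) → Prop) : Prop :=
  (∀ n A, K n A → ∀ (m : ℕ) (B : PStruc L (Fin m)) (f : Fin m → Fin n),
    IsEmb B A f → K m B) ∧
  (∀ n A m B, K n A → K m B →
    ∃ (p : ℕ) (C : PStruc L (Fin p)) (f : Fin n → Fin p) (g : Fin m → Fin p),
      K p C ∧ IsEmb A C f ∧ IsEmb B C g) ∧
  (∀ (a : ℕ) (A : PStruc L (Fin a)) (b1 : ℕ) (B1 : PStruc L (Fin b1))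
      (b2 : ℕ) (B2 : PStruc L (Fin b2)) (α1 : Fin a → Fin b1) (α2 : Fin a → Fin b2),
    K a A → K b1 B1 → K b2 B2 → IsEmb A B1 α1 → IsEmb A B2 α2 →
    ∃ (c : ℕ) (C : PStruc L (Fin c)) (β1 : Fin b1 → Fin c) (β2 : Fin b2 → Fin c),
      K c C ∧ IsFreeAmalgam A B1 B2 C α1 α2 β1 β2)

/-- An order-preserving embedding between linearly ordered structures. -/
def OrdEmb {L : PLang} {α β : Type} (A : PStruc L α) (rA : α → α → Prop)
    (B : PStruc L β) (rB : β → β → Prop) (f : α → β) : Prop :=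
  IsEmb A B f ∧ ∀ x y, rA x y → rB (f x) (f y)

/-- An isomorphism (within the structure `A`) between the induced substructures on the
closed sets `S` and `T`: an injection of `S` onto `T` preserving relations, function
domains and function values. -/
def SubIso {L : PLang} {V : Type} (A : PStruc L V) (S T : Set V) : Prop :=
  ∃ g : V → V, Set.InjOn g S ∧ g '' S = T ∧
    (∀ (R : L.Rel) (t : Fin (L.relAr R) → V), (∀ i, t i ∈ S) →
      (t ∈ A.rel R ↔ (fun i => g (t i)) ∈ A.rel R)) ∧
    (∀ (F : L.Fn) (t : Fin (L.fnDom F) → V), (∀ i, t i ∈ S) →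
      ((A.fn F t).isSome ↔ (A.fn F (fun i => g (t i))).isSome) ∧
      (∀ s, A.fn F t = some s → A.fn F (fun i => g (t i)) = some (g '' s)))

section Aux

variable {L : PLang} {α β : Type}

lemma cl_closed (A : PStruc L α) (Bs : Set α) : A.ClosedIn (A.Cl Bs) := by
  intro F t ht s hs x hx
  rw [PStruc.Cl, Set.mem_sInter]
  intro S hS
  exact hS.1 F t (fun i => Set.mem_sInter.mp (ht i) S hS) s hs hx

lemma subset_cl (A : PStruc L α) (Bs : Set α) : Bs ⊆ A.Cl Bs :=
  fun _ hx => Set.mem_sInter.mpr fun _ hS => hS.2 hx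

lemma cl_min {A : PStruc L α} {S Bs : Set α} (h1 : A.ClosedIn S) (h2 : Bs ⊆ S) :
    A.Cl Bs ⊆ S :=
  Set.sInter_subset_of_mem ⟨h1, h2⟩

lemma subIso_refl (A : PStruc L α) (S : Set α) : SubIso A S S := by
  refine ⟨id, Set.injOn_id S, Set.image_id S, fun R t _ => Iff.rfl, fun F t _ => ⟨Iff.rfl, ?_⟩⟩
  intro s hs
  simpa [Set.image_id] using hs

lemma emb_cl {A : PStruc L α} {C : PStruc L β} {f : α → β} (hf : IsEmb A C f) (u : α) :
    C.Cl {f u} = f '' (A.Cl {u}) := by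
  haveI : Nonempty α := ⟨u⟩
  apply Set.Subset.antisymm
  · apply cl_min
    · intro F t ht s hs
      have hx : ∀ i, Function.invFun f (t i) ∈ A.Cl {u} ∧ f (Function.invFun f (t i)) = t i := by
        intro i
        obtain ⟨a, ha, hae⟩ := ht i
        have hinv : Function.invFun f (t i) = a := by
          rw [← hae, Function.leftInverse_invFun hf.1]
        rw [hinv, hae]; exact ⟨ha, rfl⟩
      set x := fun i => Function.invFun f (t i) with hxdef
      have htx : t = fun i => f (x i) := funext fun i => ((hx i).2).symm
      rw [htx] at hs
      have hsome : (A.fn F x).isSome := by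
        rw [(hf.2.2 F x).1, hs]; rfl
      obtain ⟨s0, hs0⟩ := Option.isSome_iff_exists.mp hsome
      have hval := (hf.2.2 F x).2 s0 hs0
      rw [hval] at hs
      have hseq : f '' s0 = s := Option.some.inj hs
      rw [← hseq]
      exact Set.image_mono (cl_closed A {u} F x (fun i => (hx i).1) s0 hs0)
    · exact Set.singleton_subset_iff.mpr
        (Set.mem_image_of_mem f (subset_cl A {u} rfl))
  · rw [Set.image_subset_iff]
    apply cl_min
    · intro F t ht s hs y hy
      have hv := (hf.2.2 F t).2 s hs
      exact cl_closed C {f u} F (fun i => f (t i)) ht (f '' s) hv (Set.mem_image_of_mem f hy)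
    · exact Set.singleton_subset_iff.mpr (subset_cl C {f u} rfl)

lemma transfer_of {A : PStruc L α} {C : PStruc L β} {e1 e2 : α → β}
    (h1 : IsEmb A C e1) (h2 : IsEmb A C e2) (u w : α)
    (h : SubIso A (A.Cl {u}) (A.Cl {w})) :
    SubIso C (C.Cl {e1 u}) (C.Cl {e2 w}) := by
  classical
  haveI : Nonempty α := ⟨u⟩
  obtain ⟨g, ginj, gim, grel, gfn⟩ := h
  set S := A.Cl {u} with hSdef
  set T := A.Cl {w} with hTdef
  rw [emb_cl h1, emb_cl h2]
  set G : β → β := fun x => if x ∈ e1 '' S then e2 (g (Function.invFun e1 x)) else x with hGdef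
  have hG : ∀ x ∈ S, G (e1 x) = e2 (g x) := by
    intro x hx
    have hmem : e1 x ∈ e1 '' S := Set.mem_image_of_mem _ hx
    simp only [hGdef, if_pos hmem, Function.leftInverse_invFun h1.1 x]
  refine ⟨G, ?_, ?_, ?_, ?_⟩
  · rintro _ ⟨a, ha, rfl⟩ _ ⟨b, hb, rfl⟩ hab
    rw [hG a ha, hG b hb] at hab
    exact congrArg e1 (ginj ha hb (h2.1 hab))
  · rw [Set.image_image, Set.image_congr hG, ← Set.image_image e2 g, gim]
  · intro R t ht
    choose x hxS hxe using fun i => ht i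
    have hGt : (fun i => G (t i)) = fun i => e2 (g (x i)) :=
      funext fun i => by rw [← hxe i, hG _ (hxS i)]
    have htx : t = fun i => e1 (x i) := funext fun i => (hxe i).symm
    rw [hGt, htx]
    calc (fun i => e1 (x i)) ∈ C.rel R ↔ x ∈ A.rel R := (h1.2.1 R x).symm
      _ ↔ (fun i => g (x i)) ∈ A.rel R := grel R x hxS
      _ ↔ (fun i => e2 (g (x i))) ∈ C.rel R := h2.2.1 R _
  · intro F t ht
    choose x hxS hxe using fun i => ht i
    have hGt : (fun i => G (t i)) = fun i => e2 (g (x i)) :=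
      funext fun i => by rw [← hxe i, hG _ (hxS i)]
    have htx : t = fun i => e1 (x i) := funext fun i => (hxe i).symm
    constructor
    · rw [hGt, htx]
      calc (C.fn F fun i => e1 (x i)).isSome ↔ (A.fn F x).isSome := (h1.2.2 F x).1.symm
        _ ↔ (A.fn F fun i => g (x i)).isSome := (gfn F x hxS).1
        _ ↔ (C.fn F fun i => e2 (g (x i))).isSome := (h2.2.2 F _).1
    · intro s hs
      rw [htx] at hs
      have hsome : (A.fn F x).isSome := by rw [(h1.2.2 F x).1, hs]; rfl
      obtain ⟨s0, hs0⟩ := Option.isSome_iff_exists.mp hsome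
      have he1 : C.fn F (fun i => e1 (x i)) = some (e1 '' s0) := (h1.2.2 F x).2 s0 hs0
      rw [he1] at hs
      have hseq : s = e1 '' s0 := (Option.some.inj hs).symm
      have hs0S : s0 ⊆ S := cl_closed A {u} F x hxS s0 hs0
      have hg0 : A.fn F (fun i => g (x i)) = some (g '' s0) := (gfn F x hxS).2 s0 hs0
      have he2 : C.fn F (fun i => e2 (g (x i))) = some (e2 '' (g '' s0)) :=
        (h2.2.2 F (fun i => g (x i))).2 (g '' s0) hg0
      have himg : G '' (e1 '' s0) = e2 '' (g '' s0) := by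
        rw [Set.image_image, Set.image_congr (fun a ha => hG a (hs0S ha)),
          ← Set.image_image e2 g]
      rw [hGt, hseq, himg]
      exact he2

lemma transfer_to {A : PStruc L α} {C : PStruc L β} {e1 e2 : α → β}
    (h1 : IsEmb A C e1) (h2 : IsEmb A C e2) (u w : α)
    (h : SubIso C (C.Cl {e1 u}) (C.Cl {e2 w})) :
    SubIso A (A.Cl {u}) (A.Cl {w}) := by
  classical
  haveI : Nonempty α := ⟨u⟩
  obtain ⟨G, Ginj, Gim, Grel, Gfn⟩ := h
  rw [emb_cl h1] at Ginj Gim Grel Gfn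
  rw [emb_cl h2] at Gim
  set S := A.Cl {u} with hSdef
  set T := A.Cl {w} with hTdef
  have hGmem : ∀ x ∈ S, G (e1 x) ∈ e2 '' T := by
    intro x hx
    rw [← Gim]
    exact Set.mem_image_of_mem G (Set.mem_image_of_mem e1 hx)
  set g : α → α := fun x => if x ∈ S then Function.invFun e2 (G (e1 x)) else x with hgdef
  have hg : ∀ x ∈ S, e2 (g x) = G (e1 x) ∧ g x ∈ T := by
    intro x hx
    obtain ⟨a, haT, hae⟩ := hGmem x hx
    have hinv : Function.invFun e2 (G (e1 x)) = a := by
      rw [← hae, Function.leftInverse_invFun h2.1]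
    simp only [hgdef, if_pos hx, hinv]
    exact ⟨hae, haT⟩
  refine ⟨g, ?_, ?_, ?_, ?_⟩
  · intro a ha b hb hab
    have hcong := congrArg e2 hab
    rw [(hg a ha).1, (hg b hb).1] at hcong
    exact h1.1 (Ginj (Set.mem_image_of_mem e1 ha) (Set.mem_image_of_mem e1 hb) hcong)
  · apply Set.Subset.antisymm
    · rintro _ ⟨a, ha, rfl⟩
      exact (hg a ha).2
    · intro wv hw
      have hmem : e2 wv ∈ G '' (e1 '' S) := by
        rw [Gim]; exact Set.mem_image_of_mem e2 hw
      obtain ⟨_, ⟨a, haS, rfl⟩, hGe⟩ := hmem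
      refine ⟨a, haS, h2.1 ?_⟩
      rw [(hg a haS).1, hGe]
  · intro R t ht
    have hEt : ∀ i, e1 (t i) ∈ e1 '' S := fun i => Set.mem_image_of_mem _ (ht i)
    have hGfun : (fun i => G (e1 (t i))) = fun i => e2 (g (t i)) :=
      funext fun i => ((hg (t i) (ht i)).1).symm
    calc t ∈ A.rel R ↔ (fun i => e1 (t i)) ∈ C.rel R := h1.2.1 R t
      _ ↔ (fun i => G (e1 (t i))) ∈ C.rel R := Grel R (fun i => e1 (t i)) hEt
      _ ↔ (fun i => e2 (g (t i))) ∈ C.rel R := by rw [hGfun]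
      _ ↔ (fun i => g (t i)) ∈ A.rel R := (h2.2.1 R (fun i => g (t i))).symm
  · intro F t ht
    have hEt : ∀ i, e1 (t i) ∈ e1 '' S := fun i => Set.mem_image_of_mem _ (ht i)
    have hGfun : (fun i => G (e1 (t i))) = fun i => e2 (g (t i)) :=
      funext fun i => ((hg (t i) (ht i)).1).symm
    constructor
    · calc (A.fn F t).isSome
          ↔ (C.fn F fun i => e1 (t i)).isSome := (h1.2.2 F t).1
        _ ↔ (C.fn F fun i => G (e1 (t i))).isSome := (Gfn F (fun i => e1 (t i)) hEt).1
        _ ↔ (C.fn F fun i => e2 (g (t i))).isSome := by rw [hGfun]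
        _ ↔ (A.fn F fun i => g (t i)).isSome := (h2.2.2 F (fun i => g (t i))).1.symm
    · intro s hs
      have hsS : s ⊆ S := cl_closed A {u} F t ht s hs
      have h1v : C.fn F (fun i => e1 (t i)) = some (e1 '' s) := (h1.2.2 F t).2 s hs
      have hGv : C.fn F (fun i => G (e1 (t i))) = some (G '' (e1 '' s)) :=
        (Gfn F (fun i => e1 (t i)) hEt).2 (e1 '' s) h1v
      have h2some : (A.fn F (fun i => g (t i))).isSome := by
        rw [(h2.2.2 F (fun i => g (t i))).1]
        rw [← hGfun, hGv]; rfl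
      obtain ⟨s2, hs2⟩ := Option.isSome_iff_exists.mp h2some
      have h2v : C.fn F (fun i => e2 (g (t i))) = some (e2 '' s2) :=
        (h2.2.2 F (fun i => g (t i))).2 s2 hs2
      have himg : G '' (e1 '' s) = e2 '' (g '' s) := by
        rw [Set.image_image, Set.image_congr (fun a ha => ((hg a (hsS ha)).1).symm),
          ← Set.image_image e2 g]
      have hsome_eq : some (e2 '' (g '' s)) = some (e2 '' s2) := by
        rw [← himg, ← hGv, hGfun, h2v]
      have hs2eq : g '' s = s2 :=
        Set.image_injective.mpr h2.1 (Option.some.inj hsome_eq)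
      rw [hs2, ← hs2eq]

end Aux

/-- If a free amalgamation class `K` contains a structure with two vertices whose closures
are not isomorphic, then the class of freely ordered structures of `K` fails the ordering
property: there is an ordered `A` such that for every `B ∈ K` some linear ordering of `B`
contains no ordered copy of `A`. -/
theorem stmt7 {L : PLang} (K : ∀ n : ℕ, PStruc L (Fin n) → Prop)
    (hK : FreeAmalgClass K)
    (n0 : ℕ) (A0 : PStruc L (Fin n0)) (hA0 : K n0 A0) (u v : Fin n0)
    (hniso : ¬ SubIso A0 (PStruc.Cl A0 {u}) (PStruc.Cl A0 {v})) :
    ∃ (n : ℕ) (A : PStruc L (Fin n)) (rA : Fin n → Fin n → Prop),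
      K n A ∧ IsLinearOrder (Fin n) rA ∧
      ∀ (m : ℕ) (B : PStruc L (Fin m)), K m B →
        ∃ rB : Fin m → Fin m → Prop, IsLinearOrder (Fin m) rB ∧
          ¬∃ f : Fin n → Fin m, OrdEmb A rA B rB f := by
  classical
  -- the ordering of A0 : put `u` before `v`
  set e : Fin n0 ≃ Fin n0 := if v < u then Equiv.swap u v else Equiv.refl _ with hedef
  have heuv : e u ≤ e v := by
    by_cases h : v < u
    · simp only [hedef, if_pos h, Equiv.swap_apply_left, Equiv.swap_apply_right]
      exact le_of_lt h
    · simp only [hedef, if_neg h, Equiv.refl_apply]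
      exact le_of_not_gt h
  refine ⟨n0, A0, fun x y => e x ≤ e y, hA0, ?_, ?_⟩
  · exact { refl := fun x => le_refl _,
            trans := fun a b c hab hbc => le_trans hab hbc,
            antisymm := fun a b hab hba => e.injective (le_antisymm hab hba),
            total := fun a b => le_total _ _ }
  · intro m B hB
    by_cases hex : ∃ f : Fin n0 → Fin m, IsEmb A0 B f
    · obtain ⟨f0, hf0⟩ := hex
      set Pv : Fin m → Prop := fun x => SubIso B (B.Cl {x}) (B.Cl {f0 v}) with hPvdef
      set k : Fin m → ℕ := fun x => if Pv x then 0 else 1 with hkdef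
      refine ⟨fun x y => k x < k y ∨ (k x = k y ∧ x ≤ y), ?_, ?_⟩
      · exact { refl := fun x => Or.inr ⟨rfl, le_refl x⟩,
                trans := by
                  rintro a b c (hab | ⟨hab, hab'⟩) (hbc | ⟨hbc, hbc'⟩)
                  · exact Or.inl (lt_trans hab hbc)
                  · exact Or.inl (hbc ▸ hab)
                  · exact Or.inl (hab ▸ hbc)
                  · exact Or.inr ⟨hab.trans hbc, le_trans hab' hbc'⟩,
                antisymm := by
                  rintro a b (hab | ⟨hab, hab'⟩) (hba | ⟨hba, hba'⟩)
                  · exact absurd hba (lt_asymm hab)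
                  · exact absurd hab (hba ▸ lt_irrefl _)
                  · exact absurd hba (hab ▸ lt_irrefl _)
                  · exact le_antisymm hab' hba',
                total := by
                  intro a b
                  rcases lt_trichotomy (k a) (k b) with h | h | h
                  · exact Or.inl (Or.inl h)
                  · rcases le_total a b with h' | h'
                    · exact Or.inl (Or.inr ⟨h, h'⟩)
                    · exact Or.inr (Or.inr ⟨h.symm, h'⟩)
                  · exact Or.inr (Or.inl h) }
      · rintro ⟨f, hemb, hord⟩
        have h1 : Pv (f v) :=
          transfer_of hemb hf0 v v (subIso_refl A0 (A0.Cl {v}))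
        have h2 : ¬ Pv (f u) := fun h =>
          hniso (transfer_to hemb hf0 u v h)
        have hku : k (f u) = 1 := if_neg h2
        have hkv : k (f v) = 0 := if_pos h1
        have h3 : k (f u) < k (f v) ∨ (k (f u) = k (f v) ∧ f u ≤ f v) := hord u v heuv
        rw [hku, hkv] at h3
        rcases h3 with h | ⟨h, _⟩ <;> omega
    · refine ⟨fun x y => x ≤ y, ?_, ?_⟩
      · exact { refl := fun x => le_refl x,
                trans := fun a b c => le_trans,
                antisymm := fun a b => le_antisymm,
                total := fun a b => le_total a b }
      · rintro ⟨f, hemb, _⟩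
        exact hex ⟨f, hemb⟩
end

section
/- Let Σ be a finite alphabet and N the Hales-Jewett number guaranteeing a monochromatic combinatorial line for every 2-colouring of Σ^N. Let B be an A-partite L-system and let Ã_1,...,Ã_t enumerate all copies of A in B. Construct C with parts X^i_C consisting of all functions f: {1,...,N} → X^i_B, relations holding coordinatewise, and function values defined coordinatewise when defined at all coordinates. Then for every combinatorial line L = (ω, h) in {1,...,t}^N, the map e_L sending v ∈ X^p_B to the function with e_L(v)(i) = v for i ∈ ω and e_L(v)(i) = the unique vertex of Ã_{h(i)} ∩ X^p_B otherwise, is an embedding of A-partite systems B → C. -/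
/-- An `A`-partite `L`-system over a structure `A` with vertex set `Fin a`: a structure
`str` with a projection `part` onto `A` which is a homomorphism, and such that every
relational tuple, and every function-domain tuple together with its value, is transversal
(meets each part in at most one vertex). -/
structure Partite {L : PLang} {a : ℕ} (A : PStruc L (Fin a)) (β : Type) where
  str : PStruc L β
  part : β → Fin a
  hom_rel : ∀ (R : L.Rel) (t : Fin (L.relAr R) → β),
    t ∈ str.rel R → (fun i => part (t i)) ∈ A.rel R
  hom_fn : ∀ (F : L.Fn) (t : Fin (L.fnDom F) → β) (s : Set β),
    str.fn F t = some s → A.fn F (fun i => part (t i)) = some (part '' s)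
  trans_rel : ∀ (R : L.Rel) (t : Fin (L.relAr R) → β), t ∈ str.rel R →
    ∀ i j, part (t i) = part (t j) → t i = t j
  trans_fn : ∀ (F : L.Fn) (t : Fin (L.fnDom F) → β) (s : Set β), str.fn F t = some s →
    (∀ i j, part (t i) = part (t j) → t i = t j) ∧
    (∀ x ∈ s, ∀ i, part x = part (t i) → x = t i) ∧
    (∀ x ∈ s, ∀ y ∈ s, part x = part y → x = y)

/-- Vertices of the `N`-th power of the partite system `B`: functions `Fin N → β`
taking values in a single part of `B`. -/
def PowV {L : PLang} {a : ℕ} {A : PStruc L (Fin a)} {β : Type}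
    (B : Partite A β) (N : ℕ) : Type :=
  {f : Fin N → β // ∀ i j, B.part (f i) = B.part (f j)}

/-- The power structure: relations hold coordinatewise, and a function value is defined
iff it is defined at every coordinate, in which case it is the set of part-consistent
coordinatewise selectors of the coordinate values. -/
def powStr {L : PLang} {a : ℕ} {A : PStruc L (Fin a)} {β : Type}
    (B : Partite A β) (N : ℕ) : PStruc L (PowV B N) where
  rel R := {t | ∀ i : Fin N, (fun j => (t j).1 i) ∈ B.str.rel R}
  fn F t :=
    if h : ∀ i : Fin N, (B.str.fn F (fun j => (t j).1 i)).isSome then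
      some {g : PowV B N | ∀ i : Fin N, g.1 i ∈ (B.str.fn F (fun j => (t j).1 i)).get (h i)}
    else none

/-- The projection of the power system to the parts of `A` (requires `0 < N`). -/
def powPart {L : PLang} {a : ℕ} {A : PStruc L (Fin a)} {β : Type}
    (B : Partite A β) (N : ℕ) (hN : 0 < N) : PowV B N → Fin a :=
  fun g => B.part (g.1 ⟨0, hN⟩)

/-- Given an enumeration `copies` of (some) partite copies of `A` in `B`, every
combinatorial line `(ω, h)` (with `ω ≠ ∅`) induces a map `e` into the power system,
with `e(v)(i) = v` for `i ∈ ω` and `e(v)(i)` the unique vertex of the copy `copies (h i)`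
in the part of `v` otherwise; any such map is an embedding of `A`-partite systems. -/
theorem stmt9 {L : PLang} {a : ℕ} {A : PStruc L (Fin a)} {β : Type}
    (B : Partite A β) (N t : ℕ) (hN : 0 < N)
    (copies : Fin t → (Fin a → β))
    (hcop : ∀ k, IsEmb A B.str (copies k) ∧ ∀ p, B.part (copies k p) = p)
    (ω : Set (Fin N)) (hω : ω.Nonempty) (h : Fin N → Fin t)
    (e : β → PowV B N)
    (he1 : ∀ v, ∀ i ∈ ω, (e v).1 i = v)
    (he2 : ∀ v, ∀ i, i ∉ ω → (e v).1 i = copies (h i) (B.part v)) :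
    IsEmb B.str (powStr B N) e ∧ ∀ v, powPart B N hN (e v) = B.part v := by
  obtain ⟨i0, hi0⟩ := hω
  have hpart : ∀ v i, B.part ((e v).1 i) = B.part v := by
    intro v i
    by_cases hi : i ∈ ω
    · rw [he1 v i hi]
    · rw [he2 v i hi, (hcop (h i)).2]
  constructor
  · refine ⟨?_, ?_, ?_⟩
    · intro u v huv
      have := congrArg (fun g : PowV B N => g.1 i0) huv
      simpa [he1 u i0 hi0, he1 v i0 hi0] using this
    · intro R t
      constructor
      · intro ht i
        by_cases hi : i ∈ ω
        · have hc : (fun j => (e (t j)).1 i) = t := funext fun j => he1 _ i hi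
          simpa [hc] using ht
        · have hc : (fun j => (e (t j)).1 i) = fun j => copies (h i) (B.part (t j)) :=
            funext fun j => he2 _ i hi
          simp only [hc]
          exact ((hcop (h i)).1.2.1 R (fun j => B.part (t j))).mp (B.hom_rel R t ht)
      · intro ht
        have h0 := ht i0
        have hc : (fun j => (e (t j)).1 i0) = t := funext fun j => he1 _ i0 hi0
        simpa [hc] using h0
    · intro F t
      have hcoord : ∀ i, i ∈ ω → (fun j => (e (t j)).1 i) = t :=
        fun i hi => funext fun j => he1 _ i hi
      have hcoord' : ∀ i, i ∉ ω →
          (fun j => (e (t j)).1 i) = fun j => copies (h i) (B.part (t j)) :=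
        fun i hi => funext fun j => he2 _ i hi
      constructor
      · simp only [powStr]
        constructor
        · intro hs
          obtain ⟨s, hsome⟩ := Option.isSome_iff_exists.mp hs
          rw [dif_pos]
          · rfl
          · intro i
            by_cases hi : i ∈ ω
            · rw [hcoord i hi]; exact hs
            · rw [hcoord' i hi, ((hcop (h i)).1.2.2 F (fun j => B.part (t j))).2 _
                (B.hom_fn F t s hsome)]
              rfl
        · intro hs
          by_cases hcond : ∀ i : Fin N, (B.str.fn F (fun j => (e (t j)).1 i)).isSome
          · have := hcond i0
            rwa [hcoord i0 hi0] at this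
          · rw [dif_neg hcond] at hs; exact absurd hs (by simp)
      · intro s hsome
        have hA := B.hom_fn F t s hsome
        have hval : ∀ i, i ∉ ω →
            B.str.fn F (fun j => (e (t j)).1 i) = some (copies (h i) '' (B.part '' s)) := by
          intro i hi
          rw [hcoord' i hi]
          exact ((hcop (h i)).1.2.2 F _).2 _ hA
        have hcond : ∀ i : Fin N, (B.str.fn F (fun j => (e (t j)).1 i)).isSome := by
          intro i
          by_cases hi : i ∈ ω
          · rw [hcoord i hi, hsome]; rfl
          · rw [hval i hi]; rfl
        have hgetω : ∀ i, i ∈ ω →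
            (B.str.fn F (fun j => (e (t j)).1 i)).get (hcond i) = s := by
          intro i hi
          have hc : B.str.fn F (fun j => (e (t j)).1 i) = some s := by
            rw [hcoord i hi]; exact hsome
          simp [hc]
        have hgetω' : ∀ i (hi : i ∉ ω),
            (B.str.fn F (fun j => (e (t j)).1 i)).get (hcond i)
              = copies (h i) '' (B.part '' s) := by
          intro i hi
          simp [hval i hi]
        simp only [powStr, dif_pos hcond]
        congr 1
        ext g
        simp only [Set.mem_setOf_eq, Set.mem_image]
        constructor
        · intro hg
          have hx : g.1 i0 ∈ s := by
            have := hg i0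
            rwa [hgetω i0 hi0] at this
          refine ⟨g.1 i0, hx, ?_⟩
          apply Subtype.ext
          funext i
          have hpg : B.part (g.1 i) = B.part (g.1 i0) := g.2 i i0
          by_cases hi : i ∈ ω
          · have hgi : g.1 i ∈ s := by
              have := hg i
              rwa [hgetω i hi] at this
            rw [he1 (g.1 i0) i hi]
            exact (B.trans_fn F t s hsome).2.2 (g.1 i0) hx (g.1 i) hgi hpg.symm
          · have hgi := hg i
            rw [hgetω' i hi] at hgi
            obtain ⟨z, ⟨y, hy, rfl⟩, hz⟩ := hgi
            rw [he2 (g.1 i0) i hi]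
            have hpy : B.part y = B.part (g.1 i0) := by
              have := congrArg B.part hz
              rw [(hcop (h i)).2] at this
              exact this.trans hpg
            have : y = g.1 i0 := (B.trans_fn F t s hsome).2.2 y hy (g.1 i0) hx hpy
            rw [← hz, this]
        · rintro ⟨x, hx, rfl⟩
          intro i
          by_cases hi : i ∈ ω
          · rw [hgetω i hi, he1 x i hi]; exact hx
          · rw [hgetω' i hi, he2 x i hi]
            exact ⟨B.part x, ⟨x, hx, rfl⟩, rfl⟩
  · intro v
    exact hpart v _
end

section
/- Partite Lemma with relations and functions: Let L be a language with relations and partial functions, A a finite L-structure, and B a finite A-partite L-system. Then there exists a finite A-partite L-system C such that for every 2-colouring of the copies of A in C (as A-partite subsystems) there is a part-preserving copy of B in C on which all copies of A have the same colour. Moreover, if every irreducible subsystem of B is transversal, then C can be chosen so that every irreducible subsystem of C is transversal. -/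
/-- The closed set `S` carries an irreducible substructure of `D`: it cannot be written
as a free amalgamation of two proper substructures (two proper closed subsets covering
`S` such that no relational or function-domain tuple of `D` inside `S` meets both
parts outside the intersection). -/
def IrredSub {L : PLang} {V : Type} (D : PStruc L V) (S : Set V) : Prop :=
  D.ClosedIn S ∧
  ¬∃ S1 S2 : Set V, S1 ⊆ S ∧ S2 ⊆ S ∧ S1 ≠ S ∧ S2 ≠ S ∧ S1 ∪ S2 = S ∧
    D.ClosedIn S1 ∧ D.ClosedIn S2 ∧
    (∀ (R : L.Rel) (t : Fin (L.relAr R) → V), t ∈ D.rel R → (∀ i, t i ∈ S) →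
      ((∀ i, t i ∈ S1) ∨ (∀ i, t i ∈ S2))) ∧
    (∀ (F : L.Fn) (t : Fin (L.fnDom F) → V), (D.fn F t).isSome → (∀ i, t i ∈ S) →
      ((∀ i, t i ∈ S1) ∨ (∀ i, t i ∈ S2)))

/-- A partite copy of `A` in the partite system `B`: an embedding of structures which is
a section of the projection. -/
def PartiteCopy {L : PLang} {a : ℕ} (A : PStruc L (Fin a)) {β : Type}
    (B : Partite A β) (g : Fin a → β) : Prop :=
  IsEmb A B.str g ∧ ∀ p, B.part (g p) = p

/-- A part-preserving embedding of `A`-partite systems. -/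
def PartiteEmb {L : PLang} {a : ℕ} {A : PStruc L (Fin a)} {β γ : Type}
    (B : Partite A β) (C : Partite A γ) (e : β → γ) : Prop :=
  IsEmb B.str C.str e ∧ ∀ v, C.part (e v) = B.part v


/-! ### Auxiliary material for the proof -/

section PartiteLemmaAux

variable {L : PLang}

lemma PStruc.closedIn_cl {V : Type} (D : PStruc L V) (X : Set V) : D.ClosedIn (D.Cl X) := by
  intro F t ht s heq z hz
  refine Set.mem_sInter.mpr fun S' hS' => ?_
  exact hS'.1 F t (fun j => Set.mem_sInter.mp (ht j) S' hS') s heq hz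

lemma PStruc.subset_cl {V : Type} (D : PStruc L V) (X : Set V) : X ⊆ D.Cl X :=
  fun _ hz => Set.mem_sInter.mpr fun _ hS' => hS'.2 hz

lemma PStruc.cl_subset {V : Type} (D : PStruc L V) {X S' : Set V}
    (h1 : D.ClosedIn S') (h2 : X ⊆ S') : D.Cl X ⊆ S' :=
  fun _ hz => Set.mem_sInter.mp hz S' ⟨h1, h2⟩

lemma Option.get_eq_of_eq_some' {α : Type*} {o : Option α} {x : α} (h : o = some x)
    (h' : o.isSome) : o.get h' = x := by subst h; rfl

variable {a : ℕ} {A : PStruc L (Fin a)} {β : Type}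

/-- Vertices of the power of `B` over an index type `ι`. -/
def PLPowV (B : Partite A β) (ι : Type) : Type :=
  {f : ι → β // ∀ i j, B.part (f i) = B.part (f j)}

open scoped Classical in
/-- The power structure over an index type `ι`. -/
noncomputable def plPowStr (B : Partite A β) (ι : Type) : PStruc L (PLPowV B ι) where
  rel R := {t | ∀ i : ι, (fun j => (t j).1 i) ∈ B.str.rel R}
  fn F t :=
    if h : ∀ i : ι, (B.str.fn F (fun j => (t j).1 i)).isSome then
      some {g : PLPowV B ι | ∀ i : ι, g.1 i ∈ (B.str.fn F (fun j => (t j).1 i)).get (h i)}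
    else none

lemma plPowStr_fn_eq (B : Partite A β) (ι : Type) {F : L.Fn}
    (u : Fin (L.fnDom F) → PLPowV B ι)
    (h : ∀ i : ι, (B.str.fn F (fun j => (u j).1 i)).isSome) :
    (plPowStr B ι).fn F u =
      some {g : PLPowV B ι | ∀ i : ι, g.1 i ∈ (B.str.fn F (fun j => (u j).1 i)).get (h i)} :=
  dif_pos h

lemma plPowStr_fn_some (B : Partite A β) (ι : Type) {F : L.Fn}
    {u : Fin (L.fnDom F) → PLPowV B ι} {s : Set (PLPowV B ι)}
    (hs : (plPowStr B ι).fn F u = some s) :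
    ∃ h : ∀ i : ι, (B.str.fn F (fun j => (u j).1 i)).isSome,
      s = {g : PLPowV B ι | ∀ i : ι, g.1 i ∈ (B.str.fn F (fun j => (u j).1 i)).get (h i)} := by
  by_cases h : ∀ i : ι, (B.str.fn F (fun j => (u j).1 i)).isSome
  · refine ⟨h, ?_⟩
    have := (plPowStr_fn_eq B ι u h).symm.trans hs
    exact (Option.some.inj this).symm
  · have : (plPowStr B ι).fn F u = none := dif_neg h
    rw [this] at hs
    exact absurd hs (by simp)

lemma plPowStr_fn_isSome (B : Partite A β) (ι : Type) {F : L.Fn}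
    {u : Fin (L.fnDom F) → PLPowV B ι}
    (hs : ((plPowStr B ι).fn F u).isSome) :
    ∀ i : ι, (B.str.fn F (fun j => (u j).1 i)).isSome := by
  by_cases h : ∀ i : ι, (B.str.fn F (fun j => (u j).1 i)).isSome
  · exact h
  · have : (plPowStr B ι).fn F u = none := dif_neg h
    rw [this] at hs
    simp at hs

/-- The power of a partite system, as a partite system. -/
noncomputable def plPowPartite (B : Partite A β) (ι : Type) (i0 : ι) : Partite A (PLPowV B ι) where
  str := plPowStr B ι
  part g := B.part (g.1 i0)
  hom_rel := by
    intro R t ht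
    exact B.hom_rel R (fun j => (t j).1 i0) (ht i0)
  hom_fn := by
    intro F t s hs
    obtain ⟨h, rfl⟩ := plPowStr_fn_some B ι hs
    have hval : ∀ i : ι, B.str.fn F (fun j => (t j).1 i) =
        some ((B.str.fn F (fun j => (t j).1 i)).get (h i)) :=
      fun i => (Option.some_get (h i)).symm
    have hA : ∀ i : ι, A.fn F (fun j => B.part ((t j).1 i)) =
        some (B.part '' ((B.str.fn F (fun j => (t j).1 i)).get (h i))) :=
      fun i => B.hom_fn F _ _ (hval i)
    have hdom : ∀ i : ι, (fun j => B.part ((t j).1 i)) = (fun j => B.part ((t j).1 i0)) :=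
      fun i => funext fun j => (t j).2 i i0
    have himg : ∀ i : ι, B.part '' ((B.str.fn F (fun j => (t j).1 i)).get (h i)) =
        B.part '' ((B.str.fn F (fun j => (t j).1 i0)).get (h i0)) := by
      intro i
      have h1 := hA i
      rw [hdom i] at h1
      exact Option.some.inj ((hA i0).symm.trans h1) |>.symm
    rw [hA i0]
    apply congrArg
    ext x
    constructor
    · rintro ⟨w, hw, rfl⟩
      have hx : ∀ i : ι, ∃ z, z ∈ (B.str.fn F (fun j => (t j).1 i)).get (h i) ∧
          B.part z = B.part w := by
        intro i
        have : B.part w ∈ B.part '' ((B.str.fn F (fun j => (t j).1 i)).get (h i)) := by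
          rw [himg i]; exact ⟨w, hw, rfl⟩
        obtain ⟨z, hz1, hz2⟩ := this
        exact ⟨z, hz1, hz2⟩
      refine ⟨⟨fun i => (hx i).choose, ?_⟩, ?_, ?_⟩
      · intro i j
        rw [(hx i).choose_spec.2, (hx j).choose_spec.2]
      · intro i
        exact (hx i).choose_spec.1
      · exact (hx i0).choose_spec.2
    · rintro ⟨g, hg, rfl⟩
      exact ⟨g.1 i0, hg i0, rfl⟩
  trans_rel := by
    intro R t ht j1 j2 hp
    apply Subtype.ext
    funext i
    refine B.trans_rel R (fun j => (t j).1 i) (ht i) j1 j2 ?_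
    rw [(t j1).2 i i0, (t j2).2 i i0]
    exact hp
  trans_fn := by
    intro F t s hs
    obtain ⟨h, rfl⟩ := plPowStr_fn_some B ι hs
    have hval : ∀ i : ι, B.str.fn F (fun j => (t j).1 i) =
        some ((B.str.fn F (fun j => (t j).1 i)).get (h i)) :=
      fun i => (Option.some_get (h i)).symm
    have hbt := fun i : ι => B.trans_fn F (fun j => (t j).1 i) _ (hval i)
    refine ⟨?_, ?_, ?_⟩
    · intro j1 j2 hp
      apply Subtype.ext
      funext i
      refine (hbt i).1 j1 j2 ?_
      rw [(t j1).2 i i0, (t j2).2 i i0]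
      exact hp
    · intro x hx j hp
      apply Subtype.ext
      funext i
      refine (hbt i).2.1 (x.1 i) (hx i) j ?_
      rw [x.2 i i0, (t j).2 i i0]
      exact hp
    · intro x hx y hy hp
      apply Subtype.ext
      funext i
      refine (hbt i).2.2 (x.1 i) (hx i) (y.1 i) (hy i) ?_
      rw [x.2 i i0, y.2 i i0]
      exact hp

end PartiteLemmaAux

/-- Partite Lemma with relations and functions: for every finite structure `A` and finite
`A`-partite system `B` there is a finite `A`-partite system `C` such that every
2-colouring of the partite copies of `A` in `C` admits a partite copy of `B` in `C` on
which all copies of `A` get the same colour; moreover, if every irreducible subsystem of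
`B` is transversal then `C` can be chosen so that every irreducible subsystem of `C` is
transversal. -/
theorem stmt11 {L : PLang} {a : ℕ} (A : PStruc L (Fin a)) {β : Type} [Fintype β]
    (B : Partite A β) :
    ∃ (γ : Type) (_ : Fintype γ) (C : Partite A γ),
      (∀ χ : (Fin a → γ) → Fin 2, ∃ e : β → γ, PartiteEmb B C e ∧
        ∀ g1 g2 : Fin a → β, PartiteCopy A B g1 → PartiteCopy A B g2 →
          χ (fun p => e (g1 p)) = χ (fun p => e (g2 p))) ∧
      ((∀ S : Set β, IrredSub B.str S → Set.InjOn B.part S) →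
        ∀ S : Set γ, IrredSub C.str S → Set.InjOn C.part S) := by
  classical
  obtain ⟨ι, ιfin, hHJ⟩ :=
    Combinatorics.Line.exists_mono_in_high_dimension
      {g : Fin a → β // PartiteCopy A B g} (Fin 2)
  haveI := ιfin
  obtain ⟨l0, -⟩ := hHJ fun _ => 0
  obtain ⟨i0, -⟩ := l0.proper
  refine ⟨PLPowV B ι,
    @Fintype.ofFinite _ (inferInstanceAs (Finite {f : ι → β // ∀ i j, B.part (f i) = B.part (f j)})),
    plPowPartite B ι i0, ?_, ?_⟩
  · -- the colouring property
    intro χ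
    have hlift : ∀ (f : ι → {g : Fin a → β // PartiteCopy A B g}) (p : Fin a) (i j : ι),
        B.part ((f i).1 p) = B.part ((f j).1 p) := by
      intro f p i j; rw [(f i).2.2 p, (f j).2.2 p]
    obtain ⟨l, c, hc⟩ := hHJ fun f => χ (fun p => ⟨fun i => (f i).1 p, hlift f p⟩)
    obtain ⟨im, him⟩ := l.proper
    set ef : β → ι → β := fun v i => (l.idxFun i).elim v (fun h => h.1 (B.part v)) with hef
    have hefnone : ∀ v i, l.idxFun i = none → ef v i = v := by
      intro v i h; simp [hef, h]
    have hefsome : ∀ v i h, l.idxFun i = some h → ef v i = h.1 (B.part v) := by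
      intro v i h hcc; simp [hef, hcc]
    have hpart : ∀ v i, B.part (ef v i) = B.part v := by
      intro v i
      cases hcc : l.idxFun i with
      | none => rw [hefnone v i hcc]
      | some h => rw [hefsome v i h hcc, h.2.2]
    set e : β → PLPowV B ι := fun v => ⟨ef v, fun i j => (hpart v i).trans (hpart v j).symm⟩
      with he
    have hcoordnone : ∀ {n : ℕ} (t : Fin n → β) (i : ι), l.idxFun i = none →
        (fun j => (e (t j)).1 i) = t := by
      intro n t i hcc; funext j; exact hefnone (t j) i hcc
    have hcoordsome : ∀ {n : ℕ} (t : Fin n → β) (i : ι) h, l.idxFun i = some h →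
        (fun j => (e (t j)).1 i) = fun j => h.1 (B.part (t j)) := by
      intro n t i h hcc; funext j; exact hefsome (t j) i h hcc
    have hfnval : ∀ (F : L.Fn) (t : Fin (L.fnDom F) → β) (s : Set β),
        B.str.fn F t = some s →
        (plPowStr B ι).fn F (fun j => e (t j)) = some (e '' s) := by
      intro F t s heq
      have hAfn : A.fn F (fun j => B.part (t j)) = some (B.part '' s) := B.hom_fn F t s heq
      have hcnone : ∀ i : ι, l.idxFun i = none →
          B.str.fn F (fun j => (e (t j)).1 i) = some s := by
        intro i hcc; rw [hcoordnone t i hcc]; exact heq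
      have hcsome : ∀ (i : ι) h, l.idxFun i = some h →
          B.str.fn F (fun j => (e (t j)).1 i) = some (h.1 '' (B.part '' s)) := by
        intro i h hcc
        rw [hcoordsome t i h hcc]
        exact (h.2.1.2.2 F (fun j => B.part (t j))).2 _ hAfn
      have hs : ∀ i : ι, (B.str.fn F (fun j => (e (t j)).1 i)).isSome := by
        intro i
        cases hcc : l.idxFun i with
        | none => rw [hcnone i hcc]; rfl
        | some h => rw [hcsome i h hcc]; rfl
      rw [plPowStr_fn_eq B ι (fun j => e (t j)) hs]
      apply congrArg
      ext g
      simp only [Set.mem_setOf_eq]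
      constructor
      · intro hg
        have hxm : g.1 im ∈ s := by
          have h2 := hg im
          rwa [Option.get_eq_of_eq_some' (hcnone im him)] at h2
        refine ⟨g.1 im, hxm, ?_⟩
        apply Subtype.ext
        funext i
        show ef (g.1 im) i = g.1 i
        cases hcc : l.idxFun i with
        | none =>
          have hgi : g.1 i ∈ s := by
            have h2 := hg i
            rwa [Option.get_eq_of_eq_some' (hcnone i hcc)] at h2
          have h3 : g.1 i = g.1 im :=
            (B.trans_fn F t s heq).2.2 (g.1 i) hgi (g.1 im) hxm (g.2 i im)
          rw [hefnone (g.1 im) i hcc]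
          exact h3.symm
        | some h =>
          have hgi := hg i
          rw [Option.get_eq_of_eq_some' (hcsome i h hcc)] at hgi
          obtain ⟨p, hp, hgieq⟩ := hgi
          obtain ⟨x', hx', rfl⟩ := hp
          have hp1 : B.part (g.1 i) = B.part x' := by
            rw [← hgieq, h.2.2]
          have hp2 : B.part (g.1 i) = B.part (g.1 im) := g.2 i im
          have h4 : x' = g.1 im :=
            (B.trans_fn F t s heq).2.2 x' hx' (g.1 im) hxm (hp1.symm.trans hp2)
          rw [hefsome (g.1 im) i h hcc, ← h4, hgieq]
      · rintro ⟨x, hx, rfl⟩ i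
        cases hcc : l.idxFun i with
        | none =>
          rw [Option.get_eq_of_eq_some' (hcnone i hcc)]
          show ef x i ∈ s
          rw [hefnone x i hcc]
          exact hx
        | some h =>
          rw [Option.get_eq_of_eq_some' (hcsome i h hcc)]
          show ef x i ∈ h.1 '' (B.part '' s)
          rw [hefsome x i h hcc]
          exact ⟨B.part x, ⟨x, hx, rfl⟩, rfl⟩
    have hemb : IsEmb B.str (plPowStr B ι) e := by
      refine ⟨?_, ?_, ?_⟩
      · intro v w hvw
        have h2 : ef v im = ef w im := congrArg (fun z : PLPowV B ι => z.1 im) hvw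
        rwa [hefnone v im him, hefnone w im him] at h2
      · intro R t
        constructor
        · intro ht i
          show (fun j => (e (t j)).1 i) ∈ B.str.rel R
          cases hcc : l.idxFun i with
          | none => rw [hcoordnone t i hcc]; exact ht
          | some h =>
            rw [hcoordsome t i h hcc]
            exact (h.2.1.2.1 R fun j => B.part (t j)).mp (B.hom_rel R t ht)
        · intro ht
          have h2 : (fun j => (e (t j)).1 im) ∈ B.str.rel R := ht im
          rwa [hcoordnone t im him] at h2
      · intro F t
        refine ⟨⟨?_, ?_⟩, ?_⟩
        · intro hsome
          obtain ⟨s, heq⟩ := Option.isSome_iff_exists.mp hsome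
          rw [hfnval F t s heq]; rfl
        · intro hsome
          have hs := plPowStr_fn_isSome B ι hsome
          have h2 : (B.str.fn F (fun j => (e (t j)).1 im)).isSome := hs im
          rwa [hcoordnone t im him] at h2
        · intro s heq; exact hfnval F t s heq
    refine ⟨e, ⟨hemb, fun v => hpart v i0⟩, ?_⟩
    intro g1 g2 hg1 hg2
    have key : ∀ (g : Fin a → β) (hg : PartiteCopy A B g), χ (fun p => e (g p)) = c := by
      intro g hg
      have hEq : (fun p => e (g p)) =
          fun p => (⟨fun i => ((l ⟨g, hg⟩) i).1 p,
            hlift (l ⟨g, hg⟩) p⟩ : PLPowV B ι) := by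
        funext p
        apply Subtype.ext
        funext i
        show ef (g p) i = ((l ⟨g, hg⟩) i).1 p
        cases hcc : l.idxFun i with
        | none =>
          rw [hefnone (g p) i hcc, Combinatorics.Line.apply_none l ⟨g, hg⟩ i hcc]
        | some h =>
          rw [hefsome (g p) i h hcc, hg.2 p, Combinatorics.Line.coe_apply, hcc,
            Option.getD_some]
      rw [hEq]
      exact hc ⟨g, hg⟩
    rw [key g1 hg1, key g2 hg2]
  · -- transversality of irreducible subsystems
    intro HB S hS
    intro u hu v hv huv
    apply Subtype.ext
    funext i
    set base : Set β := (fun w : PLPowV B ι => w.1 i) '' S with hbase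
    have hTirr : IrredSub B.str (B.str.Cl base) := by
      refine ⟨PStruc.closedIn_cl B.str base, ?_⟩
      rintro ⟨X1, X2, hs1, hs2, hne1, hne2, huni, hc1, hc2, hr, hf⟩
      refine hS.2 ⟨{w | w ∈ S ∧ w.1 i ∈ X1}, {w | w ∈ S ∧ w.1 i ∈ X2},
        fun w hw => hw.1, fun w hw => hw.1, ?_, ?_, ?_, ?_, ?_, ?_, ?_⟩
      · intro hEq
        apply hne1
        refine le_antisymm hs1 (PStruc.cl_subset B.str hc1 ?_)
        rintro x ⟨w, hw, rfl⟩
        exact (show w ∈ {w | w ∈ S ∧ w.1 i ∈ X1} from hEq.symm ▸ hw).2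
      · intro hEq
        apply hne2
        refine le_antisymm hs2 (PStruc.cl_subset B.str hc2 ?_)
        rintro x ⟨w, hw, rfl⟩
        exact (show w ∈ {w | w ∈ S ∧ w.1 i ∈ X2} from hEq.symm ▸ hw).2
      · apply Set.eq_of_subset_of_subset
        · rintro w (hw | hw) <;> exact hw.1
        · intro w hw
          have hwT : w.1 i ∈ B.str.Cl base := PStruc.subset_cl B.str base ⟨w, hw, rfl⟩
          rw [← huni] at hwT
          cases hwT with
          | inl h => exact Or.inl ⟨hw, h⟩
          | inr h => exact Or.inr ⟨hw, h⟩
      · intro F t ht s hsome z hz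
        obtain ⟨h, rfl⟩ := plPowStr_fn_some B ι hsome
        refine ⟨hS.1 F t (fun j => (ht j).1) _ hsome hz, ?_⟩
        exact hc1 F (fun j => (t j).1 i) (fun j => (ht j).2) _
          (Option.some_get (h i)).symm (hz i)
      · intro F t ht s hsome z hz
        obtain ⟨h, rfl⟩ := plPowStr_fn_some B ι hsome
        refine ⟨hS.1 F t (fun j => (ht j).1) _ hsome hz, ?_⟩
        exact hc2 F (fun j => (t j).1 i) (fun j => (ht j).2) _
          (Option.some_get (h i)).symm (hz i)
      · intro R t ht hts
        have key := hr R (fun j => (t j).1 i) (ht i)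
          (fun j => PStruc.subset_cl B.str base ⟨t j, hts j, rfl⟩)
        cases key with
        | inl h => exact Or.inl fun j => ⟨hts j, h j⟩
        | inr h => exact Or.inr fun j => ⟨hts j, h j⟩
      · intro F t hsome hts
        have h := plPowStr_fn_isSome B ι hsome
        have key := hf F (fun j => (t j).1 i) (h i)
          (fun j => PStruc.subset_cl B.str base ⟨t j, hts j, rfl⟩)
        cases key with
        | inl hh => exact Or.inl fun j => ⟨hts j, hh j⟩
        | inr hh => exact Or.inr fun j => ⟨hts j, hh j⟩
    have hInj := HB _ hTirr
    refine hInj (PStruc.subset_cl B.str base ⟨u, hu, rfl⟩)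
      (PStruc.subset_cl B.str base ⟨v, hv, rfl⟩) ?_
    rw [u.2 i i0, v.2 i i0]
    exact huv
end

section
/- A finite graph G is orientable so that every vertex has out-degree at most k if and only if every subgraph H of G satisfies |E(H)| ≤ k·|V(H)| (equivalently, δ(H) = k|V(H)| − |E(H)| ≥ 0 for all subgraphs H). -/
/-- Marriage-theorem characterization of `k`-orientability: a finite graph `G` admits an
orientation of its edges with all out-degrees at most `k` if and only if every subgraph
`H` satisfies `|E(H)| ≤ k·|V(H)|` (equivalently `δ(H) = k|V(H)| − |E(H)| ≥ 0`). -/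
theorem stmt15 {V : Type} [Fintype V] (G : SimpleGraph V) (k : ℕ) :
    (∃ E : V → V → Prop,
      (∀ u v, E u v → G.Adj u v) ∧
      (∀ u v, G.Adj u v → Xor' (E u v) (E v u)) ∧
      (∀ v, {w | E v w}.ncard ≤ k))
    ↔ ∀ s : Set V,
        {e : Sym2 V | e ∈ G.edgeSet ∧ ∀ v ∈ e, v ∈ s}.ncard ≤ k * s.ncard := by
  classical
  constructor
  · rintro ⟨E, hE1, hE2, hE3⟩ s
    -- choose for each edge an orientation
    set F : Set (Sym2 V) := {e : Sym2 V | e ∈ G.edgeSet ∧ ∀ v ∈ e, v ∈ s} with hF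
    set T : Set (V × V) := {p : V × V | p.1 ∈ s ∧ E p.1 p.2} with hT
    have hex : ∀ e ∈ F, ∃ p : V × V, E p.1 p.2 ∧ e = Sym2.mk p.1 p.2 := by
      rintro e ⟨he, hvs⟩
      induction e using Sym2.inductionOn with
      | hf u v =>
        rw [SimpleGraph.mem_edgeSet] at he
        rcases hE2 u v he with ⟨h1, _⟩ | ⟨h1, _⟩
        · exact ⟨(u, v), h1, rfl⟩
        · exact ⟨(v, u), h1, Sym2.eq_swap⟩
    let f : Sym2 V → V × V := fun e =>
      if h : ∃ p : V × V, E p.1 p.2 ∧ e = Sym2.mk p.1 p.2 then h.choose else e.out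
    have hfspec : ∀ e ∈ F, E (f e).1 (f e).2 ∧ e = Sym2.mk (f e).1 (f e).2 := by
      intro e he
      have h := hex e he
      simp only [f, dif_pos h]
      exact h.choose_spec
    have hmaps : ∀ e ∈ F, f e ∈ T := by
      intro e he
      obtain ⟨h1, h2⟩ := hfspec e he
      refine ⟨?_, h1⟩
      apply he.2
      have hm := Sym2.mem_mk_left (f e).1 (f e).2
      rwa [← h2] at hm
    have hinj : Set.InjOn f F := by
      intro e he e' he' hfe
      rw [(hfspec e he).2, (hfspec e' he').2, hfe]
    have h1 : F.ncard ≤ T.ncard :=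
      Set.ncard_le_ncard_of_injOn f hmaps hinj (Set.toFinite T)
    refine h1.trans ?_
    -- now bound T via fibers of Prod.fst
    rw [Set.ncard_eq_toFinset_card' T, Set.ncard_eq_toFinset_card' s]
    apply Finset.card_le_mul_card_image_of_maps_to (f := Prod.fst)
    · intro p hp
      rw [Set.mem_toFinset] at hp
      rw [Set.mem_toFinset]
      exact hp.1
    · intro b _
      have : (Finset.filter (fun a => a.1 = b) T.toFinset).card
          ≤ ({w | E b w}).ncard := by
        rw [Set.ncard_eq_toFinset_card' {w | E b w}]
        apply Finset.card_le_card_of_injOn Prod.snd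
        · intro p hp
          simp only [Finset.mem_coe, Finset.mem_filter, Set.mem_toFinset] at hp ⊢
          rcases hp with ⟨⟨_, hE⟩, h1⟩
          subst h1; exact hE
        · intro p hp q hq hpq
          simp only [Finset.mem_coe, Finset.mem_filter] at hp hq
          exact Prod.ext (hp.2.trans hq.2.symm) hpq
      exact this.trans (hE3 b)
  · intro h
    -- Hall's theorem setup
    let t : G.edgeSet → Finset (V × Fin k) := fun e =>
      Finset.univ.filter (fun p => p.1 ∈ e.1)
    have hall : ∀ S : Finset G.edgeSet, S.card ≤ (S.biUnion t).card := by
      intro S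
      set s : Set V := {v | ∃ e ∈ S, v ∈ (e : G.edgeSet).1} with hs
      have h1 : S.card ≤ {e : Sym2 V | e ∈ G.edgeSet ∧ ∀ v ∈ e, v ∈ s}.ncard := by
        rw [Set.ncard_eq_toFinset_card']
        rw [← Finset.card_image_of_injective S Subtype.val_injective]
        apply Finset.card_le_card
        intro e he
        rw [Finset.mem_image] at he
        obtain ⟨e', he', rfl⟩ := he
        rw [Set.mem_toFinset]
        exact ⟨e'.2, fun v hv => ⟨e', he', hv⟩⟩
      have h2 := h s
      have h3 : (S.biUnion t).card = s.ncard * k := by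
        have : S.biUnion t = s.toFinset ×ˢ Finset.univ := by
          ext ⟨v, i⟩
          simp only [Finset.mem_biUnion, Finset.mem_filter, Finset.mem_univ, true_and,
            Finset.mem_product, Set.mem_toFinset, and_true, t]
          constructor
          · rintro ⟨e, he, hv⟩; exact ⟨e, he, hv⟩
          · rintro ⟨e, he, hv⟩; exact ⟨e, he, hv⟩
        rw [this, Finset.card_product, Finset.card_univ, Fintype.card_fin,
          Set.ncard_eq_toFinset_card']
      rw [h3, mul_comm]
      exact h1.trans h2
    obtain ⟨f, hfinj, hft⟩ := (Finset.all_card_le_biUnion_card_iff_exists_injective t).mp hall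
    have hfmem : ∀ e : G.edgeSet, (f e).1 ∈ e.1 := by
      intro e
      have := hft e
      simpa only [Finset.mem_filter, Finset.mem_univ, true_and, t] using this
    refine ⟨fun u v => ∃ h : G.Adj u v, (f ⟨s(u, v), h⟩).1 = u, ?_, ?_, ?_⟩
    · rintro u v ⟨h, _⟩; exact h
    · intro u v huv
      have hne : u ≠ v := huv.ne
      have hswap : (⟨s(v, u), huv.symm⟩ : G.edgeSet) = ⟨s(u, v), huv⟩ :=
        Subtype.ext (Sym2.eq_swap)
      have hmem := hfmem ⟨s(u, v), huv⟩
      rw [Sym2.mem_iff] at hmem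
      rcases hmem with hu | hv
      · refine Or.inl ⟨⟨huv, hu⟩, ?_⟩
        rintro ⟨h', hv'⟩
        rw [hswap] at hv'
        exact hne (hu.symm.trans hv')
      · refine Or.inr ⟨⟨huv.symm, by rw [hswap]; exact hv⟩, ?_⟩
        rintro ⟨h', hu'⟩
        exact hne (hu'.symm.trans hv)
    · intro v
      rcases Set.eq_empty_or_nonempty {w | ∃ h : G.Adj v w, (f ⟨s(v, w), h⟩).1 = v} with he | hne
      · rw [he]; simp
      · obtain ⟨w0, hw0, _⟩ := hne
        -- junk value in Fin k exists
        have i0 : Fin k := (f ⟨s(v, w0), hw0⟩).2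
        set g : V → Fin k := fun w =>
          if h : G.Adj v w then (f ⟨s(v, w), h⟩).2 else i0 with hg
        have : {w | ∃ h : G.Adj v w, (f ⟨s(v, w), h⟩).1 = v}.ncard
            ≤ (Set.univ : Set (Fin k)).ncard := by
          apply Set.ncard_le_ncard_of_injOn g (fun _ _ => Set.mem_univ _) ?_ (Set.toFinite _)
          rintro w ⟨hw, hwv⟩ w' ⟨hw', hwv'⟩ hgw
          simp only [g, dif_pos hw, dif_pos hw'] at hgw
          have hfeq : f ⟨s(v, w), hw⟩ = f ⟨s(v, w'), hw'⟩ :=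
            Prod.ext (hwv.trans hwv'.symm) hgw
          have := hfinj hfeq
          rw [Subtype.ext_iff] at this
          simp only [Sym2.eq, Sym2.rel_iff', Prod.mk.injEq, Prod.swap_prod_mk] at this
          rcases this with ⟨_, h2⟩ | ⟨h1, h2⟩
          · exact h2
          · exact absurd h2.symm hw.ne
        simpa [Set.ncard_univ] using this
end

section
/- For the class S_{r,t} encoding partial Steiner (r,t)-systems via a partial function F from t-tuples to r-element sets, the map G ↦ S_G is a bijection (up to isomorphism) between partial Steiner (r,t)-systems and structures in S_{r,t}, and G is a strongly induced subsystem of H if and only if S_G is a substructure of S_H. -/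
/-- A partial Steiner `(r,t)`-system: an `r`-uniform hypergraph in which every `t`-element
vertex set lies in at most one hyperedge. -/
def IsSteiner {V : Type} (r t : ℕ) (H : Set (Finset V)) : Prop :=
  (∀ e ∈ H, e.card = r) ∧
  ∀ s : Finset V, s.card = t → ∀ e1 ∈ H, ∀ e2 ∈ H, s ⊆ e1 → s ⊆ e2 → e1 = e2

/-- The encoding `S_G`: the partial function sending an injective `t`-tuple to the unique
hyperedge containing it (if any). -/
noncomputable def encodeSt {V : Type} (t : ℕ) (H : Set (Finset V)) :
    (Fin t → V) → Option (Finset V) := fun x =>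
  haveI := Classical.propDecidable
  if h : Function.Injective x ∧ ∃ e ∈ H, ∀ i, x i ∈ e then some h.2.choose else none

/-- Membership in the class `S_{r,t}`: tuples in the domain are injective, values are
`r`-sets containing their tuple, and every injective `t`-tuple from a value is in the
domain with the same value. -/
def InSrt {V : Type} (r t : ℕ) (F : (Fin t → V) → Option (Finset V)) : Prop :=
  ∀ x e, F x = some e → Function.Injective x ∧ e.card = r ∧ (∀ i, x i ∈ e) ∧
    ∀ y : Fin t → V, Function.Injective y → (∀ i, y i ∈ e) → F y = some e

/-- The induced (strongly induced candidate) subsystem of `H` on the vertex set `S`. -/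
def restrictH {V : Type} (H : Set (Finset V)) (S : Finset V) : Set (Finset V) :=
  {e ∈ H | e ⊆ S}

lemma exists_tuple {V : Type} {t : ℕ} (s : Finset V) (hs : s.card = t) :
    ∃ x : Fin t → V, Function.Injective x ∧ ∀ i, x i ∈ s := by
  refine ⟨fun i => (s.equivFin.symm (Fin.cast hs.symm i)).1, ?_, fun i => (s.equivFin.symm _).2⟩
  intro i j hij
  have h2 := s.equivFin.symm.injective (Subtype.ext hij)
  exact Fin.val_injective (by simpa using congrArg Fin.val h2)

lemma encode_some {V : Type} [DecidableEq V] {t : ℕ} {H : Set (Finset V)}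
    {x : Fin t → V} {e : Finset V} (h : encodeSt t H x = some e) :
    Function.Injective x ∧ e ∈ H ∧ ∀ i, x i ∈ e := by
  unfold encodeSt at h
  by_cases hc : Function.Injective x ∧ ∃ e ∈ H, ∀ i, x i ∈ e
  · rw [dif_pos hc] at h
    obtain ⟨he, hxe⟩ := hc.2.choose_spec
    cases Option.some.inj h
    exact ⟨hc.1, he, hxe⟩
  · rw [dif_neg hc] at h; exact absurd h (by simp)

lemma encode_eq_some {V : Type} [DecidableEq V] {r t : ℕ} {H : Set (Finset V)}
    (hH : IsSteiner r t H) {x : Fin t → V} {e : Finset V}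
    (hx : Function.Injective x) (he : e ∈ H) (hxe : ∀ i, x i ∈ e) :
    encodeSt t H x = some e := by
  have hcond : Function.Injective x ∧ ∃ e ∈ H, ∀ i, x i ∈ e := ⟨hx, e, he, hxe⟩
  unfold encodeSt
  rw [dif_pos hcond]
  obtain ⟨he', hxe'⟩ := hcond.2.choose_spec
  have hs : (Finset.image x Finset.univ).card = t := by
    rw [Finset.card_image_of_injective _ hx, Finset.card_univ, Fintype.card_fin]
  have h1 : Finset.image x Finset.univ ⊆ hcond.2.choose := by
    intro v hv; simp only [Finset.mem_image] at hv; obtain ⟨i, _, rfl⟩ := hv; exact hxe' i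
  have h2 : Finset.image x Finset.univ ⊆ e := by
    intro v hv; simp only [Finset.mem_image] at hv; obtain ⟨i, _, rfl⟩ := hv; exact hxe i
  exact congrArg some (hH.2 _ hs _ he' _ he h1 h2)

lemma restrict_steiner {V : Type} {r t : ℕ} {H : Set (Finset V)} (hH : IsSteiner r t H)
    (S : Finset V) : IsSteiner r t (restrictH H S) :=
  ⟨fun e he => hH.1 e he.1, fun s hs e1 he1 e2 he2 h1 h2 => hH.2 s hs e1 he1.1 e2 he2.1 h1 h2⟩

/-- The map `G ↦ S_G` is a bijection (up to equality of encodings) between partial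
Steiner `(r,t)`-systems and structures in `S_{r,t}`, and `G` is a strongly induced
subsystem of `H` exactly when `S_G` is a substructure of `S_H`. -/
theorem stmt16 {V : Type} [DecidableEq V] (r t : ℕ) (htr : t ≤ r) (ht : 2 ≤ t) :
    (∀ H : Set (Finset V), IsSteiner r t H → InSrt r t (encodeSt t H)) ∧
    (∀ H1 H2 : Set (Finset V), IsSteiner r t H1 → IsSteiner r t H2 →
      encodeSt t H1 = encodeSt t H2 → H1 = H2) ∧
    (∀ F : (Fin t → V) → Option (Finset V), InSrt r t F →
      ∃ H : Set (Finset V), IsSteiner r t H ∧ F = encodeSt t H) ∧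
    (∀ H : Set (Finset V), IsSteiner r t H → ∀ S : Finset V,
      ((∀ e ∈ H, ¬ e ⊆ S → (e.filter (· ∈ S)).card ≤ t - 1)
        ↔ ((∀ x e, encodeSt t H x = some e → (∀ i, x i ∈ S) → e ⊆ S) ∧
           (∀ x : Fin t → V, (∀ i, x i ∈ S) →
             encodeSt t (restrictH H S) x = encodeSt t H x)))) := by
  have key : ∀ (H : Set (Finset V)), IsSteiner r t H → ∀ e ∈ H, ∃ x : Fin t → V,
      Function.Injective x ∧ (∀ i, x i ∈ e) ∧ encodeSt t H x = some e := by
    intro H hH e he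
    obtain ⟨s, hse, hs⟩ := Finset.exists_subset_card_eq (s := e) (n := t) (by rw [hH.1 e he]; exact htr)
    obtain ⟨x, hx, hxs⟩ := exists_tuple s hs
    exact ⟨x, hx, fun i => hse (hxs i), encode_eq_some hH hx he fun i => hse (hxs i)⟩
  refine ⟨?_, ?_, ?_, ?_⟩
  · intro H hH x e hxe
    obtain ⟨hx, he, hmem⟩ := encode_some hxe
    exact ⟨hx, hH.1 e he, hmem, fun y hy hye => encode_eq_some hH hy he hye⟩
  · intro H1 H2 h1 h2 heq
    ext e
    constructor
    · intro he
      obtain ⟨x, hx, hmem, hcode⟩ := key H1 h1 e he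
      rw [heq] at hcode
      exact (encode_some hcode).2.1
    · intro he
      obtain ⟨x, hx, hmem, hcode⟩ := key H2 h2 e he
      rw [← heq] at hcode
      exact (encode_some hcode).2.1
  · intro F hF
    set H : Set (Finset V) := {e | ∃ x, F x = some e} with hHdef
    have hH : IsSteiner r t H := by
      constructor
      · rintro e ⟨x, hx⟩; exact (hF x e hx).2.1
      · rintro s hs e1 ⟨x1, hx1⟩ e2 ⟨x2, hx2⟩ h1 h2
        obtain ⟨y, hy, hys⟩ := exists_tuple s hs
        have f1 := (hF x1 e1 hx1).2.2.2 y hy fun i => h1 (hys i)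
        have f2 := (hF x2 e2 hx2).2.2.2 y hy fun i => h2 (hys i)
        exact Option.some.inj (f1.symm.trans f2)
    refine ⟨H, hH, funext fun x => ?_⟩
    cases hFx : F x with
    | some e =>
      obtain ⟨hx, _, hmem, _⟩ := hF x e hFx
      exact (encode_eq_some hH hx ⟨x, hFx⟩ hmem).symm
    | none =>
      by_contra hne
      cases hEx : encodeSt t H x with
      | none => exact hne hEx.symm
      | some e =>
        obtain ⟨hx, ⟨x', hx'⟩, hmem⟩ := encode_some hEx
        have := (hF x' e hx').2.2.2 x hx hmem
        rw [hFx] at this; exact absurd this (by simp)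
  · intro H hH S
    have main : (∀ e ∈ H, ¬ e ⊆ S → (e.filter (· ∈ S)).card ≤ t - 1) →
        ∀ x e, encodeSt t H x = some e → (∀ i, x i ∈ S) → e ⊆ S := by
      intro hc x e hxe hxS
      obtain ⟨hx, he, hmem⟩ := encode_some hxe
      by_contra hnot
      have hcard := hc e he hnot
      have hsub : Finset.image x Finset.univ ⊆ e.filter (· ∈ S) := by
        intro v hv; simp only [Finset.mem_image] at hv
        obtain ⟨i, _, rfl⟩ := hv
        exact Finset.mem_filter.2 ⟨hmem i, hxS i⟩
      have : t ≤ (e.filter (· ∈ S)).card := by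
        calc t = (Finset.image x Finset.univ).card := by
              rw [Finset.card_image_of_injective _ hx, Finset.card_univ, Fintype.card_fin]
          _ ≤ _ := Finset.card_le_card hsub
      omega
    constructor
    · intro hc
      refine ⟨main hc, fun x hxS => ?_⟩
      cases hEx : encodeSt t H x with
      | some e =>
        obtain ⟨hx, he, hmem⟩ := encode_some hEx
        have heS : e ⊆ S := main hc x e hEx hxS
        exact encode_eq_some (restrict_steiner hH S) hx ⟨he, heS⟩ hmem
      | none =>
        cases hEr : encodeSt t (restrictH H S) x with
        | none => rfl
        | some e =>
          obtain ⟨hx, he, hmem⟩ := encode_some hEr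
          rw [← hEx, encode_eq_some hH hx he.1 hmem]
    · rintro ⟨hsub, -⟩ e he hnS
      by_contra hbig
      have hcard : t ≤ (e.filter (· ∈ S)).card := by omega
      obtain ⟨s, hse, hs⟩ := Finset.exists_subset_card_eq hcard
      obtain ⟨x, hx, hxs⟩ := exists_tuple s hs
      have hmem : ∀ i, x i ∈ e.filter (· ∈ S) := fun i => hse (hxs i)
      have hcode := encode_eq_some hH hx he fun i => (Finset.mem_filter.1 (hmem i)).1
      exact hnS (hsub x e hcode fun i => (Finset.mem_filter.1 (hmem i)).2)
end

section
/- The class S_{r,t} (partial Steiner (r,t)-systems encoded with a partial function from t-tuples to r-sets) is closed under free amalgamation: if A is a substructure of both B_1 and B_2 in S_{r,t}, then the free amalgam of B_1 and B_2 over A is again in S_{r,t}. -/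
/-- A partial Steiner `(r,t)`-structure supported on the vertex set `B`: the partial
function `F` sends injective `t`-tuples from `B` to `r`-element subsets of `B` containing
the tuple, and every injective `t`-tuple from a value is in the domain with the same
value. -/
def SteinerOn {V : Type} (r t : ℕ) (B : Set V)
    (F : (Fin t → V) → Option (Finset V)) : Prop :=
  ∀ x e, F x = some e →
    (∀ i, x i ∈ B) ∧ (↑e : Set V) ⊆ B ∧ Function.Injective x ∧ e.card = r ∧
    (∀ i, x i ∈ e) ∧
    ∀ y : Fin t → V, Function.Injective y → (∀ i, y i ∈ e) → F y = some e

/-- The class `S_{r,t}` is closed under free amalgamation: if `A = B1 ∩ B2` is a common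
substructure of the Steiner structures `(B1, F1)` and `(B2, F2)`, then the free amalgam
(`F1` on `B1`, `F2` on `B2`, undefined on mixed tuples, with no identifications outside
`A`) is again in `S_{r,t}`. -/
theorem stmt17 {V : Type} (r t : ℕ) (B1 B2 : Set V)
    (F1 F2 : (Fin t → V) → Option (Finset V))
    (h1 : SteinerOn r t B1 F1) (h2 : SteinerOn r t B2 F2)
    (hagree : ∀ x : Fin t → V, (∀ i, x i ∈ B1 ∩ B2) → F1 x = F2 x)
    (hcl1 : ∀ x e, F1 x = some e → (∀ i, x i ∈ B1 ∩ B2) → (↑e : Set V) ⊆ B1 ∩ B2)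
    (hcl2 : ∀ x e, F2 x = some e → (∀ i, x i ∈ B1 ∩ B2) → (↑e : Set V) ⊆ B1 ∩ B2) :
    SteinerOn r t (B1 ∪ B2) (fun x => (F1 x).orElse (fun _ => F2 x)) := by

  intro x e hx
  simp only at hx
  have hx' : F1 x = some e ∨ (F1 x = none ∧ F2 x = some e) := by
    cases h : F1 x with
    | some a => rw [h] at hx; exact Or.inl (by simpa [Option.orElse] using hx)
    | none => rw [h] at hx; exact Or.inr ⟨rfl, by simpa [Option.orElse] using hx⟩
  rcases hx' with hx | ⟨hnone, hx⟩
  · obtain ⟨hxB, heB, hinj, hcard, hmem, hclose⟩ := h1 x e hx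
    refine ⟨fun i => Or.inl (hxB i), fun v hv => Or.inl (heB hv), hinj, hcard, hmem, ?_⟩
    intro y hy hye
    have := hclose y hy hye
    simp [this, Option.orElse]
  · obtain ⟨hxB, heB, hinj, hcard, hmem, hclose⟩ := h2 x e hx
    refine ⟨fun i => Or.inr (hxB i), fun v hv => Or.inr (heB hv), hinj, hcard, hmem, ?_⟩
    intro y hy hye
    have h2y := hclose y hy hye
    cases hF1y : F1 y with
    | none => simp [hF1y, h2y, Option.orElse]
    | some e' =>
      obtain ⟨hyB1, _, _, _, _, _⟩ := h1 y e' hF1y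
      have hyA : ∀ i, y i ∈ B1 ∩ B2 := fun i => ⟨hyB1 i, heB (hye i)⟩
      have heq := hagree y hyA
      rw [← heq] at h2y
      simp [h2y, Option.orElse]
end
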